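/- arXiv:1412.0764 — 3 statements merged into one kernel-verified Lean document; each statement's English description precedes it below -/
import Mathlib

section
/- Let f: M → M be a C¹ diffeomorphism of a compact Riemannian manifold and let μ be an f-invariant Borel probability measure. Let Γ ⊆ M be a measurable set with μ(Γ) > 0 and set Ω = ∪_{n∈ℤ} f^n(Γ). Fix γ > 0. Then there exists a measurable function N₀: Ω → ℕ such that for μ-almost every x ∈ Ω, every n ≥ N₀(x), and every t ∈ [0,1], there is some l ∈ {0,1,…,n} with f^l(x) ∈ Γ and |(l/n) − t| < γ. -/
set_option maxHeartbeats 1000000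

open MeasureTheory Filter Set Manifold ProbabilityTheory
open ENNReal

noncomputable section

/-- `f` is a `C¹` diffeomorphism: a bijection of `M` such that `f` and `f⁻¹` are `C¹`. -/
def IsC1Diffeo {E : Type*} [NormedAddCommGroup E] [NormedSpace ℝ E]
    {H : Type*} [TopologicalSpace H] (I : ModelWithCorners ℝ E H)
    {M : Type*} [TopologicalSpace M] [ChartedSpace H M] (f : Equiv.Perm M) : Prop :=
  ContMDiff I I 1 f ∧ ContMDiff I I 1 f.symm

private lemma gap_lemma' {M : Type*} [MeasurableSpace M] {f : M → M} (hfm : Measurable f)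
    {μ : Measure M} [IsProbabilityMeasure μ] (hμ : MeasurePreserving f μ μ)
    {Γ : Set M} (hΓm : MeasurableSet Γ) {K : ℕ} (hK : K ≠ 0) :
    ∀ᵐ x ∂μ, ∀ᶠ l in atTop, f^[l] x ∈ Γ →
      ∃ j, 1 ≤ j ∧ j ≤ l / K ∧ f^[j + l] x ∈ Γ := by
  set U : ℕ → Set M := fun m => {x | ∀ j, 1 ≤ j → j ≤ m → f^[j] x ∉ Γ} with hU
  set A : ℕ → Set M := fun m => Γ ∩ U m with hA
  have hUm : ∀ m, MeasurableSet (U m) := by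
    intro m
    have : U m = ⋂ (j : ℕ) (_ : 1 ≤ j) (_ : j ≤ m), f^[j] ⁻¹' Γᶜ := by
      ext x; simp [hU, mem_iInter]
    rw [this]
    exact MeasurableSet.iInter fun j => MeasurableSet.iInter fun _ =>
      MeasurableSet.iInter fun _ => (hfm.iterate j) hΓm.compl
  have hAm : ∀ m, MeasurableSet (A m) := fun m => hΓm.inter (hUm m)
  have hUsucc : ∀ m x, x ∈ U (m + 1) ↔ (f x ∉ Γ ∧ f x ∈ U m) := by
    intro m x
    constructor
    · intro h
      refine ⟨by simpa using h 1 le_rfl (by omega), ?_⟩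
      intro j h1 hm
      have := h (j + 1) (by omega) (by omega)
      rwa [Function.iterate_succ_apply] at this
    · rintro ⟨h1, h⟩ j hj1 hj2
      rcases Nat.exists_eq_succ_of_ne_zero (show j ≠ 0 by omega) with ⟨i, rfl⟩
      rw [Function.iterate_succ_apply]
      rcases Nat.eq_zero_or_pos i with rfl | hi
      · simpa using h1
      · exact h i hi (by omega)
  have hsplit : ∀ m, f ⁻¹' U m = (f ⁻¹' A m) ∪ U (m + 1) := by
    intro m; ext x
    simp only [mem_preimage, mem_union, hA, mem_inter_iff, hUsucc]
    by_cases hb : f x ∈ Γ <;> tauto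
  have hdisj : ∀ m, Disjoint (f ⁻¹' A m) (U (m + 1)) := by
    intro m
    rw [Set.disjoint_left]
    intro x hx1 hx2
    exact ((hUsucc m x).1 hx2).1 hx1.1
  have hkey : ∀ m, μ (U m) = μ (A m) + μ (U (m + 1)) := by
    intro m
    have h1 : μ (f ⁻¹' U m) = μ (U m) := hμ.measure_preimage (hUm m).nullMeasurableSet
    have h2 : μ (f ⁻¹' A m) = μ (A m) := hμ.measure_preimage (hAm m).nullMeasurableSet
    rw [← h1, hsplit m, measure_union (hdisj m) (hUm (m + 1)), h2]
  have hsum : ∀ N, ∑ m ∈ Finset.range N, μ (A m) + μ (U N) = 1 := by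
    intro N
    induction N with
    | zero =>
      have : U 0 = univ := by
        ext x; simp only [hU, mem_setOf_eq, mem_univ, iff_true]
        intro j h1 h0; omega
      simp [this]
    | succ N ih =>
      rw [Finset.sum_range_succ, add_assoc, ← hkey N, ih]
  have htsum : ∑' m, μ (A m) ≤ 1 := by
    rw [ENNReal.tsum_eq_iSup_sum]
    refine iSup_le fun s => ?_
    have hsub : s ⊆ Finset.range (s.sup id + 1) := fun m hm =>
      Finset.mem_range.mpr (Nat.lt_succ_of_le (Finset.le_sup (f := id) hm))
    calc ∑ m ∈ s, μ (A m) ≤ ∑ m ∈ Finset.range (s.sup id + 1), μ (A m) :=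
          Finset.sum_le_sum_of_subset hsub
      _ ≤ 1 := (hsum (s.sup id + 1)) ▸ le_self_add
  set B : ℕ → Set M := fun l => f^[l] ⁻¹' A (l / K) with hB
  have h1 : ∀ l, μ (B l) = μ (A (l / K)) := fun l =>
    (hμ.iterate l).measure_preimage (hAm _).nullMeasurableSet
  haveI : NeZero K := ⟨hK⟩
  have h2 : ∑' l, μ (A (l / K)) = (K : ℝ≥0∞) * ∑' m, μ (A m) := by
    calc ∑' l : ℕ, μ (A (l / K)) = ∑' p : ℕ × Fin K, μ (A p.1) := by
          rw [← Equiv.tsum_eq (Nat.divModEquiv K) (fun p => μ (A p.1))]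
          exact tsum_congr fun l => by simp [Nat.divModEquiv]
      _ = ∑' m : ℕ, ∑' _ : Fin K, μ (A m) :=
          ENNReal.tsum_prod (f := fun (m : ℕ) (_ : Fin K) => μ (A m))
      _ = ∑' m : ℕ, (K : ℝ≥0∞) * μ (A m) := by
          refine tsum_congr fun m => ?_
          simp [tsum_fintype, Finset.sum_const, nsmul_eq_mul]
      _ = (K : ℝ≥0∞) * ∑' m, μ (A m) := ENNReal.tsum_mul_left
  have hfin : ∑' l, μ (B l) ≠ ∞ := by
    have hle : ∑' l, μ (B l) ≤ (K : ℝ≥0∞) := by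
      rw [tsum_congr h1, h2]
      calc (K : ℝ≥0∞) * ∑' m, μ (A m) ≤ (K : ℝ≥0∞) * 1 := mul_le_mul_right htsum _
        _ = K := mul_one _
    exact ne_top_of_le_ne_top (ENNReal.natCast_ne_top K) hle
  filter_upwards [ae_eventually_notMem hfin] with x hx
  refine hx.mono fun l hl hvisit => ?_
  by_contra hcon
  push_neg at hcon
  apply hl
  refine ⟨hvisit, ?_⟩
  intro j hj1 hj2 hbad
  rw [← Function.iterate_add_apply] at hbad
  exact hcon j hj1 hj2 hbad


variable {E : Type*} [NormedAddCommGroup E] [NormedSpace ℝ E]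
  {H : Type*} [TopologicalSpace H] (I : ModelWithCorners ℝ E H)
  {M : Type*} [MetricSpace M] [ChartedSpace H M]

/-- Bochi's return-time density lemma, Lemma 3.2. Let `f : M → M` be a `C¹`
diffeomorphism of a compact Riemannian manifold and `μ` an `f`-invariant Borel probability
measure. Let `Γ ⊆ M` be measurable with `μ(Γ) > 0` and `Ω = ⋃_{n ∈ ℤ} f^n(Γ)`. Fix `γ > 0`.
Then there is a measurable `N₀ : Ω → ℕ` such that for `μ`-a.e. `x ∈ Ω`, every `n ≥ N₀(x)` and
every `t ∈ [0,1]`, some `l ∈ {0,…,n}` satisfies `f^l(x) ∈ Γ` and `|l/n - t| < γ`. -/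
theorem return_time_density
    [FiniteDimensional ℝ E] [I.Boundaryless] [CompactSpace M] [IsManifold I (⊤ : ℕ∞) M]
    [MeasurableSpace M] [BorelSpace M]
    (f : Equiv.Perm M) (hf : IsC1Diffeo I f)
    (μ : Measure M) [IsProbabilityMeasure μ] (hμ : MeasurePreserving f μ μ)
    (Γ : Set M) (hΓm : MeasurableSet Γ) (hΓ : 0 < μ Γ)
    (γ : ℝ) (hγ : 0 < γ) :
    ∃ N₀ : M → ℕ, Measurable N₀ ∧
      ∀ᵐ x ∂μ, x ∈ ⋃ n : ℤ, (f ^ n) '' Γ →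
        ∀ n : ℕ, N₀ x ≤ n → ∀ t ∈ Set.Icc (0:ℝ) 1,
          ∃ l : ℕ, l ≤ n ∧ f^[l] x ∈ Γ ∧ |(l : ℝ) / n - t| < γ := by
  classical
  have hfm : Measurable ⇑f := hf.1.continuous.measurable
  have hfm' : Measurable ⇑f.symm := hf.2.continuous.measurable
  let Ef : M ≃ᵐ M := ⟨f, hfm, hfm'⟩
  have hμs : MeasurePreserving ⇑f.symm μ μ := MeasurePreserving.symm Ef hμ
  -- parameters
  set δ : ℝ := min (γ / 2) 1 with hδdef
  have hδ0 : 0 < δ := lt_min (by linarith) one_pos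
  have hδγ : δ ≤ γ / 2 := min_le_left _ _
  have hδ1 : δ ≤ 1 := min_le_right _ _
  set K : ℕ := max 1 ⌈2 / δ⌉₊ with hKdef
  have hK1 : 1 ≤ K := le_max_left _ _
  have hK0 : K ≠ 0 := by omega
  have hKδ : 2 / δ ≤ (K : ℝ) :=
    le_trans (Nat.le_ceil _) (by exact_mod_cast le_max_right 1 ⌈2 / δ⌉₊)
  have hδK : 2 ≤ δ * K := by
    have := (div_le_iff₀ hδ0).mp hKδ
    linarith [this]
  have hKpos : (0 : ℝ) < K := by exact_mod_cast Nat.pos_of_ne_zero hK0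
  clear_value δ K
  -- the sets Q n
  set Qs : ℕ → Set M := fun n =>
    ⋂ (q : ℚ) (_ : 0 ≤ q) (_ : q ≤ 1),
      ⋃ (l : ℕ) (_ : l ≤ n) (_ : |(l : ℝ) / (n : ℝ) - (q : ℝ)| ≤ γ / 2), f^[l] ⁻¹' Γ
    with hQsdef
  have hQmem : ∀ n x, x ∈ Qs n ↔ ∀ q : ℚ, 0 ≤ q → q ≤ 1 →
      ∃ l : ℕ, l ≤ n ∧ |(l : ℝ) / (n : ℝ) - (q : ℝ)| ≤ γ / 2 ∧ f^[l] x ∈ Γ := by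
    intro n x
    simp only [hQsdef, mem_iInter, mem_iUnion, mem_preimage]
    constructor
    · intro h q h0 h1
      obtain ⟨l, h1', h2', h3'⟩ := h q h0 h1
      exact ⟨l, h1', h2', h3'⟩
    · intro h q h0 h1
      obtain ⟨l, h1', h2', h3'⟩ := h q h0 h1
      exact ⟨l, h1', h2', h3'⟩
  have hQms : ∀ n, MeasurableSet (Qs n) := by
    intro n
    exact MeasurableSet.iInter fun q => MeasurableSet.iInter fun _ =>
      MeasurableSet.iInter fun _ => MeasurableSet.iUnion fun l =>
      MeasurableSet.iUnion fun _ => MeasurableSet.iUnion fun _ => (hfm.iterate l) hΓm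
  -- N₀
  set N₀ : M → ℕ := fun x => sInf {N | ∀ n, N ≤ n → x ∈ Qs n} with hN₀def
  have hN₀le : ∀ x k, N₀ x ≤ k ↔
      (∀ n, k ≤ n → x ∈ Qs n) ∨ (∀ N, ¬ ∀ n, N ≤ n → x ∈ Qs n) := by
    intro x k
    constructor
    · intro h
      by_cases hne : {N | ∀ n, N ≤ n → x ∈ Qs n}.Nonempty
      · left
        intro n hn
        exact Nat.sInf_mem hne n (le_trans h hn)
      · right
        intro N hN
        exact hne ⟨N, hN⟩
    · rintro (h | h)
      · exact Nat.sInf_le h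
      · have he : {N | ∀ n, N ≤ n → x ∈ Qs n} = ∅ := eq_empty_iff_forall_notMem.mpr h
        have h0 : N₀ x = 0 := by
          simp only [hN₀def]
          rw [he, Nat.sInf_empty]
        omega
  have hlev : ∀ k, MeasurableSet {x | N₀ x ≤ k} := by
    intro k
    have heq : {x | N₀ x ≤ k} =
        (⋂ (n : ℕ) (_ : k ≤ n), Qs n) ∪ (⋂ N : ℕ, (⋂ (n : ℕ) (_ : N ≤ n), Qs n)ᶜ) := by
      ext x
      simp only [mem_setOf_eq, mem_union, mem_iInter, mem_compl_iff, hN₀le, not_forall]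
    rw [heq]
    exact ((MeasurableSet.iInter fun n => MeasurableSet.iInter fun _ => hQms n).union
      (MeasurableSet.iInter fun N =>
        (MeasurableSet.iInter fun n => MeasurableSet.iInter fun _ => hQms n).compl))
  have hN₀m : Measurable N₀ := by
    apply measurable_to_countable'
    intro k
    cases k with
    | zero =>
      have : N₀ ⁻¹' {0} = {x | N₀ x ≤ 0} := by
        ext x; simp [Nat.le_zero]
      rw [this]; exact hlev 0
    | succ k =>
      have : N₀ ⁻¹' {k + 1} = {x | N₀ x ≤ k + 1} \ {x | N₀ x ≤ k} := by
        ext x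
        simp only [mem_preimage, mem_singleton_iff, mem_diff, mem_setOf_eq]
        omega
      rw [this]; exact (hlev (k + 1)).diff (hlev k)
  refine ⟨N₀, hN₀m, ?_⟩
  -- recurrence: Good set
  set Good : Set M := {x | ∃ᶠ m in atTop, f^[m] x ∈ Γ} with hGooddef
  have hGstep : ∀ x : M, x ∈ Good ↔ f x ∈ Good := by
    intro x
    simp only [hGooddef, mem_setOf_eq, frequently_atTop]
    constructor
    · intro h N
      obtain ⟨m, hm, hmem⟩ := h (N + 1)
      refine ⟨m - 1, by omega, ?_⟩
      have h2 : f^[m - 1 + 1] x ∈ Γ := by rwa [show m - 1 + 1 = m by omega]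
      rwa [Function.iterate_succ_apply] at h2
    · intro h N
      obtain ⟨m, hm, hmem⟩ := h N
      exact ⟨m + 1, by omega, by rwa [Function.iterate_succ_apply]⟩
  have hGit : ∀ (k : ℕ) (x : M), x ∈ Good ↔ f^[k] x ∈ Good := by
    intro k
    induction k with
    | zero => intro x; rfl
    | succ k ih =>
      intro x
      have hit : f^[k + 1] x = f (f^[k] x) := Function.iterate_succ_apply' _ _ _
      rw [hit, ← hGstep (f^[k] x)]
      exact ih x
  have hGits : ∀ (k : ℕ) (x : M), x ∈ Good ↔ (⇑f.symm)^[k] x ∈ Good := by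
    intro k x
    have hcancel : f^[k] ((⇑f.symm)^[k] x) = x :=
      (Function.LeftInverse.iterate f.apply_symm_apply k) x
    have h2 := hGit k ((⇑f.symm)^[k] x)
    rw [hcancel] at h2
    exact h2.symm
  have hGz : ∀ (n : ℤ) (x : M), x ∈ Good ↔ (f ^ n) x ∈ Good := by
    intro n x
    cases n with
    | ofNat k =>
      have : ⇑(f ^ (Int.ofNat k)) = f^[k] := by
        rw [show (Int.ofNat k) = (k : ℤ) from rfl, zpow_natCast, Equiv.Perm.coe_pow]
      rw [this]; exact hGit k x
    | negSucc k =>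
      have : ⇑(f ^ (Int.negSucc k)) = (⇑f.symm)^[k + 1] := by
        rw [zpow_negSucc, ← inv_pow, Equiv.Perm.inv_def, ← Equiv.Perm.coe_pow]
        try rfl
      rw [this]; exact hGits (k + 1) x
  have hzpow_symm : ∀ n : ℤ, MeasurePreserving ⇑((f ^ n).symm) μ μ := by
    intro n
    cases n with
    | ofNat k =>
      have : ⇑((f ^ (Int.ofNat k)).symm) = (⇑f.symm)^[k] := by
        rw [show (Int.ofNat k) = (k : ℤ) from rfl, zpow_natCast, ← Equiv.Perm.inv_def,
          ← inv_pow, Equiv.Perm.inv_def, ← Equiv.Perm.coe_pow]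
        try rfl
      rw [this]; exact hμs.iterate k
    | negSucc k =>
      have : ⇑((f ^ (Int.negSucc k)).symm) = f^[k + 1] := by
        rw [zpow_negSucc, Equiv.Perm.inv_def, Equiv.symm_symm, Equiv.Perm.coe_pow]
      rw [this]; exact hμ.iterate (k + 1)
  have hrec := (hμ.conservative).ae_mem_imp_frequently_image_mem hΓm.nullMeasurableSet
  have h0 : μ (Γ ∩ Goodᶜ) = 0 := by
    rw [ae_iff] at hrec
    have : {x | ¬(x ∈ Γ → ∃ᶠ m in atTop, f^[m] x ∈ Γ)} = Γ ∩ Goodᶜ := by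
      ext x
      simp only [mem_setOf_eq, mem_inter_iff, mem_compl_iff, hGooddef, Classical.not_imp]
    rwa [this] at hrec
  have hGoodae : ∀ᵐ x ∂μ, x ∈ (⋃ n : ℤ, (f ^ n) '' Γ) → x ∈ Good := by
    rw [ae_iff]
    have heq : {x | ¬(x ∈ (⋃ n : ℤ, (f ^ n) '' Γ) → x ∈ Good)} =
        ⋃ n : ℤ, ((f ^ n) '' Γ ∩ Goodᶜ) := by
      ext x
      simp only [mem_setOf_eq, Classical.not_imp, mem_iUnion, mem_inter_iff, mem_compl_iff]
      tauto
    rw [heq]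
    refine measure_iUnion_null fun n => ?_
    have hsub : (f ^ n) '' Γ ∩ Goodᶜ ⊆ ⇑((f ^ n).symm) ⁻¹' (Γ ∩ Goodᶜ) := by
      rintro y ⟨⟨z, hz, rfl⟩, hbad⟩
      refine ⟨by rwa [Equiv.symm_apply_apply], ?_⟩
      rw [Equiv.symm_apply_apply]
      intro hzG
      exact hbad ((hGz n z).mp hzG)
    refine measure_mono_null hsub ?_
    rw [(hzpow_symm n).measure_preimage (NullMeasurableSet.of_null h0), h0]
  -- main a.e. argument
  have hgap := gap_lemma' hfm hμ hΓm hK0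
  filter_upwards [hgap, hGoodae] with x hxgap hxgood hxΩ
  have hGx : x ∈ Good := hxgood hxΩ
  obtain ⟨L₀, hL₀⟩ := eventually_atTop.mp hxgap
  obtain ⟨L₁, hL₁ge, hL₁mem⟩ := frequently_atTop.mp hGx (max L₀ K)
  set N : ℕ := 2 * K * (L₁ + 1) with hNdef
  clear_value N
  -- key claim : for all m ≥ N, x ∈ Qs m
  have key : ∀ m, N ≤ m → x ∈ Qs m := by
    intro m hm
    rw [hQmem]
    intro q hq0 hq1
    have hq0' : (0 : ℝ) ≤ (q : ℝ) := by exact_mod_cast hq0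
    have hq1' : (q : ℝ) ≤ 1 := by exact_mod_cast hq1
    have hm0 : 0 < m := by
      have : 0 < N := by rw [hNdef]; positivity
      omega
    have hm0' : (0 : ℝ) < m := by exact_mod_cast hm0
    set a : ℝ := max 0 ((q : ℝ) - δ / 2) with hadef
    have ha0 : 0 ≤ a := le_max_left _ _
    have haq : a ≤ (q : ℝ) := max_le hq0' (by linarith)
    have haqlb : (q : ℝ) - δ / 2 ≤ a := le_max_right _ _
    have haub : a + δ / 2 ≤ 1 := by
      have : a ≤ 1 - δ / 2 := max_le (by linarith) (by linarith)
      linarith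
    clear_value a
    have ham : a * m ≤ m := by
      have h5 := mul_le_mul_of_nonneg_right (show a ≤ 1 by linarith) (le_of_lt hm0')
      linarith
    -- L₁ ≤ δ m / 2
    have hδm : (L₁ : ℝ) ≤ δ * m / 2 := by
      have hmN : (N : ℝ) ≤ m := by exact_mod_cast hm
      have hcast : (N : ℝ) = 2 * K * ((L₁ : ℝ) + 1) := by
        rw [hNdef]; push_cast; ring
      nlinarith [mul_le_mul_of_nonneg_left hmN hδ0.le, Nat.cast_nonneg (α := ℝ) L₁]
    have hKm : (m : ℝ) / K ≤ δ * m / 2 := by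
      rw [div_le_iff₀ hKpos]
      nlinarith [mul_le_mul_of_nonneg_left hδK (Nat.cast_nonneg (α := ℝ) m)]
    -- find a visit in the window [a m, a m + δ m / 2]
    have claim : ∃ l : ℕ, f^[l] x ∈ Γ ∧ a * m ≤ l ∧ (l : ℝ) ≤ a * m + δ * m / 2 := by
      rcases le_or_gt (a * (m : ℝ)) (L₁ : ℝ) with hcase | hcase
      · exact ⟨L₁, hL₁mem, hcase, by linarith [mul_nonneg ha0 (le_of_lt hm0')]⟩
      · set P : ℕ → Prop := fun v => L₁ ≤ v ∧ (v : ℝ) < a * m ∧ f^[v] x ∈ Γ with hPdef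
        have hL₁m : L₁ ≤ m := by
          have : (L₁ : ℝ) < m := lt_of_lt_of_le hcase ham
          exact_mod_cast this.le
        set l : ℕ := Nat.findGreatest P m with hldef
        have hPl : P l := Nat.findGreatest_spec hL₁m ⟨le_refl L₁, hcase, hL₁mem⟩
        obtain ⟨hlL₁, hlan, hlvis⟩ := hPl
        have hlL₀ : L₀ ≤ l := le_trans (le_trans (le_max_left L₀ K) hL₁ge) hlL₁
        obtain ⟨j, hj1, hjK, hjvis⟩ := hL₀ l hlL₀ hlvis
        have hlm : (l : ℝ) ≤ m := by linarith
        refine ⟨j + l, hjvis, ?_, ?_⟩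
        · by_contra hcon
          push_neg at hcon
          have hjlm : j + l ≤ m := by
            have : ((j + l : ℕ) : ℝ) < m := lt_of_lt_of_le hcon ham
            exact_mod_cast this.le
          exact (Nat.findGreatest_is_greatest (show l < j + l by omega) hjlm)
            ⟨by omega, hcon, hjvis⟩
        · have hjr : (j : ℝ) ≤ ((l / K : ℕ) : ℝ) := by exact_mod_cast hjK
          have h2 : ((l / K : ℕ) : ℝ) ≤ (l : ℝ) / K := Nat.cast_div_le
          have h3 : (l : ℝ) / K ≤ (m : ℝ) / K := by gcongr
          push_cast
          linarith
    obtain ⟨l, hvis, hge', hle'⟩ := claim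
    have hln : l ≤ m := by
      have h5 := mul_le_mul_of_nonneg_right haub (le_of_lt hm0')
      have h5' : (a + δ / 2) * (m : ℝ) = a * m + δ * m / 2 := by ring
      have h6 : (l : ℝ) ≤ m := by
        rw [h5'] at h5
        rw [one_mul] at h5
        linarith
      exact_mod_cast h6
    refine ⟨l, hln, ?_, hvis⟩
    have hdiv1 : a ≤ (l : ℝ) / m := (le_div_iff₀ hm0').mpr (by linarith)
    have hdiv2 : (l : ℝ) / m ≤ a + δ / 2 := (div_le_iff₀ hm0').mpr
      (by calc (l : ℝ) ≤ a * m + δ * m / 2 := hle'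
        _ = (a + δ / 2) * m := by ring)
    rw [abs_sub_le_iff]
    constructor <;> [linarith; linarith]
  -- conclude
  intro n hn t ht
  have hSne : {N' | ∀ m, N' ≤ m → x ∈ Qs m}.Nonempty := ⟨N, key⟩
  have hxQ : x ∈ Qs n := Nat.sInf_mem hSne n hn
  rw [hQmem] at hxQ
  obtain ⟨ht0, ht1⟩ := ht
  rcases lt_or_ge t (γ / 2) with hlt | hge
  · obtain ⟨l, hl1, hl2, hl3⟩ := hxQ 0 le_rfl (by norm_num)
    refine ⟨l, hl1, hl3, ?_⟩
    have : |(l : ℝ) / n - t| ≤ |(l : ℝ) / n - ((0 : ℚ) : ℝ)| + |((0 : ℚ) : ℝ) - t| :=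
      abs_sub_le _ _ _
    have h4 : |((0 : ℚ) : ℝ) - t| = t := by
      push_cast; rw [zero_sub, abs_neg, abs_of_nonneg ht0]
    rw [h4] at this
    linarith
  · obtain ⟨q, hq1, hq2⟩ := exists_rat_btwn (show t - γ / 2 < t by linarith)
    have hq0 : (0 : ℚ) ≤ q := by
      have : (0 : ℝ) ≤ (q : ℝ) := by linarith
      exact_mod_cast this
    have hqle1 : q ≤ 1 := by
      have : (q : ℝ) ≤ 1 := by linarith
      exact_mod_cast this
    obtain ⟨l, hl1, hl2, hl3⟩ := hxQ q hq0 hqle1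
    refine ⟨l, hl1, hl3, ?_⟩
    have habs : |(q : ℝ) - t| < γ / 2 := by
      rw [abs_sub_lt_iff]; constructor <;> linarith
    have : |(l : ℝ) / n - t| ≤ |(l : ℝ) / n - (q : ℝ)| + |(q : ℝ) - t| := abs_sub_le _ _ _
    linarith

end
end

section
/- Let f: M → M be a C¹ diffeomorphism of a compact Riemannian manifold, μ an ergodic f-invariant Borel probability measure, B ⊆ M a measurable set with μ(B) > 0, and ξ a finite Borel partition of M refining {B, M∖B}. Let φ, ψ: M → ℝ be continuous, and fix γ > 0 and δ > 0. For n ∈ ℕ define Λ₁ⁿ = {x ∈ B : f^q(x) ∈ ξ(x) for some integer q ∈ [n,(1+γ)n]} and Λ₂ⁿ = {x ∈ B : S_mψ(x) ≤ m(∫ψ dμ + γ) and S_mφ(x) ≥ m(∫φ dμ − δ) for all m ≥ n}, where ξ(x) denotes the element of ξ containing x. Then lim_{n→∞} μ(Λ₁ⁿ ∩ Λ₂ⁿ) = μ(B). -/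
open MeasureTheory Filter Set Manifold ProbabilityTheory

noncomputable section

/-- Birkhoff sum `S_n φ(x) = ∑_{i<n} φ(f^i x)`. -/
def birkhoffSumS {M : Type*} (f : M → M) (φ : M → ℝ) (n : ℕ) (x : M) : ℝ :=
  ∑ i ∈ Finset.range n, φ (f^[i] x)

/-- Bowen ball `B_n(x, ε) = {y : d(f^i x, f^i y) < ε for all 0 ≤ i ≤ n-1}`. -/
def bowenBall {M : Type*} [PseudoMetricSpace M] (f : M → M) (n : ℕ) (ε : ℝ) (x : M) : Set M :=
  {y | ∀ i < n, dist (f^[i] x) (f^[i] y) < ε}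

set_option linter.unusedSectionVars false

namespace KWAux

variable {α : Type*} [MeasurableSpace α] {μ : Measure α}

lemma bS_add (f : α → α) (φ : α → ℝ) (m n : ℕ) (x : α) :
    birkhoffSumS f φ (m + n) x = birkhoffSumS f φ m x + birkhoffSumS f φ n (f^[m] x) :=
  birkhoffSum_add f φ m n x

lemma bS_succ' (f : α → α) (φ : α → ℝ) (n : ℕ) (x : α) :
    birkhoffSumS f φ (n + 1) x = φ x + birkhoffSumS f φ n (f x) :=
  birkhoffSum_succ' f φ n x

lemma measurable_bS {f : α → α} (hf : Measurable f) {φ : α → ℝ} (hφ : Measurable φ) (n : ℕ) :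
    Measurable (birkhoffSumS f φ n) :=
  Finset.measurable_sum _ fun i _ => hφ.comp (hf.iterate i)

lemma bS_le {f : α → α} {φ : α → ℝ} {C : ℝ} (hC : ∀ x, |φ x| ≤ C) (n : ℕ) (x : α) :
    |birkhoffSumS f φ n x| ≤ n * C := by
  calc |birkhoffSumS f φ n x| ≤ ∑ i ∈ Finset.range n, |φ (f^[i] x)| :=
        Finset.abs_sum_le_sum_abs _ _
    _ ≤ ∑ _i ∈ Finset.range n, C := Finset.sum_le_sum fun i _ => hC _
    _ = n * C := by simp [Finset.sum_const, nsmul_eq_mul]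

lemma integrable_of_bdd [IsFiniteMeasure μ] {g : α → ℝ} (hg : Measurable g) {C : ℝ}
    (hC : ∀ x, |g x| ≤ C) : Integrable g μ := by
  refine (integrable_const C).mono' hg.aestronglyMeasurable (ae_of_all _ fun x => ?_)
  simpa [Real.norm_eq_abs] using hC x

lemma integral_comp_iterate {f : α → α} (hf : MeasurePreserving f μ μ) {g : α → ℝ}
    (hg : AEStronglyMeasurable g μ) (n : ℕ) :
    ∫ x, g (f^[n] x) ∂μ = ∫ x, g x ∂μ := by
  have h2 : MeasurePreserving f^[n] μ μ := hf.iterate n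
  calc ∫ x, g (f^[n] x) ∂μ = ∫ y, g y ∂(Measure.map f^[n] μ) :=
        (integral_map h2.aemeasurable (by rw [h2.map_eq]; exact hg)).symm
    _ = ∫ x, g x ∂μ := by rw [h2.map_eq]

lemma integral_bS [IsProbabilityMeasure μ] {f : α → α} (hf : MeasurePreserving f μ μ)
    {g : α → ℝ} (hg : Measurable g) {C : ℝ} (hC : ∀ x, |g x| ≤ C) (N : ℕ) :
    ∫ x, birkhoffSumS f g N x ∂μ = N * ∫ x, g x ∂μ := by
  have hint : ∀ i : ℕ, Integrable (fun x => g (f^[i] x)) μ := fun i =>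
    integrable_of_bdd (hg.comp (hf.measurable.iterate i)) (fun x => hC _)
  simp only [birkhoffSumS]
  rw [integral_finset_sum _ fun i _ => hint i]
  have h1 : ∀ i : ℕ, ∫ x, g (f^[i] x) ∂μ = ∫ x, g x ∂μ := fun i =>
    integral_comp_iterate hf hg.aestronglyMeasurable i
  simp only [h1, Finset.sum_const, Finset.card_range, nsmul_eq_mul]


lemma kw_core [IsProbabilityMeasure μ] {f : α → α} (hf : MeasurePreserving f μ μ)
    {φ : α → ℝ} (hφ : Measurable φ) {C : ℝ} (hC : ∀ x, |φ x| ≤ C) {c : ℝ}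
    (h : ∀ᵐ x ∂μ, ∃ n : ℕ, 1 ≤ n ∧ (n : ℝ) * c ≤ birkhoffSumS f φ n x) :
    c ≤ ∫ y, φ y ∂μ := by
  refine le_of_forall_pos_le_add fun ε hε => ?_
  have hfm := hf.measurable
  have hne : Nonempty α := by
    by_contra hne
    rw [not_nonempty_iff] at hne
    have h0 : μ Set.univ = 0 := by rw [Set.univ_eq_empty_iff.2 hne]; exact measure_empty
    rw [measure_univ] at h0; exact one_ne_zero h0
  obtain ⟨x₀⟩ := hne
  have hC0 : 0 ≤ C := le_trans (abs_nonneg _) (hC x₀)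
  set K := |c| + C with hK
  have hK0 : 0 ≤ K := by positivity
  have hcK : c ≤ K := (le_abs_self c).trans (by rw [hK]; linarith)
  have hφK : ∀ x, |φ x| ≤ K := fun x => (hC x).trans (by rw [hK]; linarith [abs_nonneg c])
  -- forward invariant conull set
  set S : Set α := {x | ∃ n : ℕ, 1 ≤ n ∧ (n : ℝ) * c ≤ birkhoffSumS f φ n x} with hS
  have hSm : MeasurableSet S := by
    have hSeq : S = ⋃ n : ℕ, ⋃ (_ : 1 ≤ n), {x | (n : ℝ) * c ≤ birkhoffSumS f φ n x} := by
      ext x; simp [hS]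
    rw [hSeq]
    exact MeasurableSet.iUnion fun n => MeasurableSet.iUnion fun _ =>
      measurableSet_le measurable_const (measurable_bS hfm hφ n)
  have hS0 : μ Sᶜ = 0 := by
    rw [ae_iff] at h
    rw [hS, Set.compl_setOf]
    exact h

  set G : Set α := ⋂ k : ℕ, f^[k] ⁻¹' S with hG
  have hGc : μ Gᶜ = 0 := by
    rw [hG, Set.compl_iInter]
    refine measure_iUnion_null fun k => ?_
    rw [← Set.preimage_compl, (hf.iterate k).measure_preimage hSm.compl.nullMeasurableSet]
    exact hS0
  have hGconull : ∀ᵐ x ∂μ, x ∈ G := by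
    rw [ae_iff]
    exact hGc
  have hGf : ∀ x ∈ G, f x ∈ G := by
    intro x hx
    simp only [hG, Set.mem_iInter, Set.mem_preimage] at hx ⊢
    intro k
    have h1 := hx (k + 1)
    rwa [Function.iterate_succ_apply] at h1
  have hGiter : ∀ (n : ℕ), ∀ x ∈ G, f^[n] x ∈ G := by
    intro n
    induction n with
    | zero => intro x hx; simpa using hx
    | succ n ih =>
        intro x hx
        rw [Function.iterate_succ_apply]
        exact ih _ (hGf x hx)
  -- the bad sets
  set Efam : ℕ → Set α := fun N => {x | ∀ n, 1 ≤ n → n ≤ N → birkhoffSumS f φ n x < n * c}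
    with hEfam
  have hEm : ∀ N, MeasurableSet (Efam N) := by
    intro N
    have hEeq : Efam N = ⋂ n : ℕ, ⋂ (_ : 1 ≤ n), ⋂ (_ : n ≤ N),
        {x | birkhoffSumS f φ n x < n * c} := by ext x; simp [hEfam]
    rw [hEeq]
    exact MeasurableSet.iInter fun n => MeasurableSet.iInter fun _ =>
      MeasurableSet.iInter fun _ =>
        measurableSet_lt (measurable_bS hfm hφ n) measurable_const
  have hEanti : Antitone Efam := fun N N' hNN' x hx n h1 hn => hx n h1 (hn.trans hNN')
  have hEinter : μ (⋂ N, Efam N) = 0 := by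
    refine measure_mono_null ?_ hS0
    intro x hx
    simp only [Set.mem_iInter, hEfam, Set.mem_setOf_eq] at hx
    simp only [Set.mem_compl_iff, hS, Set.mem_setOf_eq]
    rintro ⟨n, h1n, hle⟩
    exact absurd hle (not_le.2 (hx n n h1n le_rfl))
  have htendE : Tendsto (fun N => μ (Efam N)) atTop (nhds 0) := by
    have h1 := tendsto_measure_iInter_atTop (fun N => (hEm N).nullMeasurableSet) hEanti
      ⟨0, measure_ne_top μ _⟩
    rw [hEinter] at h1
    exact h1
  have hεK : (0 : ℝ) < ε / (K + 1) := by positivity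
  obtain ⟨N₀, hN₀mes, hN₀1⟩ : ∃ N₀ : ℕ, μ (Efam N₀) < ENNReal.ofReal (ε / (K + 1)) ∧ 1 ≤ N₀ := by
    have h2 : ∀ᶠ N in atTop, μ (Efam N) < ENNReal.ofReal (ε / (K + 1)) :=
      htendE.eventually_lt_const (by simpa using ENNReal.ofReal_pos.2 hεK)
    exact (h2.and (eventually_ge_atTop 1)).exists
  set E := Efam N₀ with hE
  have hEmes : MeasurableSet E := hEm N₀
  set φ' : α → ℝ := fun x => if x ∈ E then max (φ x) c else φ x with hφ'
  have hφ'm : Measurable φ' := Measurable.ite hEmes (hφ.max measurable_const) hφ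
  have hφ'K : ∀ x, |φ' x| ≤ K := by
    intro x
    have h1 := abs_le.1 (hφK x)
    by_cases hx : x ∈ E
    · simp only [hφ', hx, if_true]
      rw [abs_le]
      exact ⟨le_trans h1.1 (le_max_left _ _), max_le h1.2 hcK⟩
    · simpa [hφ', hx] using hφK x
  have hφφ' : ∀ x, φ x ≤ φ' x := by
    intro x
    by_cases hx : x ∈ E <;> simp [hφ', hx, le_max_left]
  have hcE : ∀ x ∈ E, c ≤ φ' x := fun x hx => by simp [hφ', hx, le_max_right]
  -- key induction
  have key : ∀ N : ℕ, ∀ x ∈ G, (N : ℝ) * c - N₀ * (2 * K) ≤ birkhoffSumS f φ' N x := by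
    intro N
    induction N using Nat.strong_induction_on with
    | _ N ih =>
      intro x hxG
      rcases Nat.lt_or_ge N₀ N with hN | hN
      · by_cases hxE : x ∈ E
        · obtain ⟨N', rfl⟩ : ∃ N', N = N' + 1 := ⟨N - 1, by omega⟩
          rw [bS_succ']
          have h2 := ih N' (Nat.lt_succ_self _) (f x) (hGf x hxG)
          have h3 := hcE x hxE
          push_cast
          push_cast at h2
          linarith
        · have hxE' : ¬ ∀ n, 1 ≤ n → n ≤ N₀ → birkhoffSumS f φ n x < n * c := hxE
          push_neg at hxE'
          obtain ⟨n, h1n, hnN₀, hge⟩ := hxE'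
          obtain ⟨m, rfl⟩ : ∃ m, N = n + m := ⟨N - n, by omega⟩
          rw [bS_add]
          have h2 := ih m (by omega) (f^[n] x) (hGiter n x hxG)
          have h4 : birkhoffSumS f φ n x ≤ birkhoffSumS f φ' n x :=
            Finset.sum_le_sum fun i _ => hφφ' _
          push_cast
          push_cast at h2 hge
          linarith
      · have h5 : -((N : ℝ) * K) ≤ birkhoffSumS f φ' N x := by
          have h6 := (abs_le.1 (bS_le (f := f) hφ'K N x)).1
          linarith
        have hNN : (N : ℝ) ≤ N₀ := by exact_mod_cast hN
        have hNnn : (0 : ℝ) ≤ N := Nat.cast_nonneg N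
        nlinarith [mul_le_mul_of_nonneg_left hcK hNnn, mul_le_mul_of_nonneg_right hNN hK0]
  -- integrate
  have hφ'int : Integrable φ' μ := integrable_of_bdd hφ'm hφ'K
  have hIS : ∀ N : ℕ, (N : ℝ) * c - N₀ * (2 * K) ≤ (N : ℝ) * ∫ y, φ' y ∂μ := by
    intro N
    have h1 : ∫ x, birkhoffSumS f φ' N x ∂μ = N * ∫ y, φ' y ∂μ := integral_bS hf hφ'm hφ'K N
    have h3 : ∀ᵐ x ∂μ, (N : ℝ) * c - N₀ * (2 * K) ≤ birkhoffSumS f φ' N x :=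
      hGconull.mono fun x hx => key N x hx
    have h2 : (N : ℝ) * c - N₀ * (2 * K) ≤ ∫ x, birkhoffSumS f φ' N x ∂μ := by
      have h4 := integral_mono_ae (integrable_const ((N : ℝ) * c - N₀ * (2 * K)))
        (integrable_of_bdd (measurable_bS hfm hφ'm N) (fun x => bS_le (f := f) hφ'K N x)) h3
      simpa using h4
    linarith [h1 ▸ h2]
  have hcφ' : c ≤ ∫ y, φ' y ∂μ := by
    have htend2 : Tendsto (fun N : ℕ => c - (N₀ * (2 * K)) / N) atTop (nhds c) := by
      have h1 := tendsto_const_div_atTop_nhds_zero_nat ((N₀ : ℝ) * (2 * K))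
      have h2 := (tendsto_const_nhds (x := c) (f := atTop (α := ℕ))).sub h1
      simpa using h2
    refine le_of_tendsto htend2 ?_
    filter_upwards [eventually_ge_atTop 1] with N hN
    have hNpos : (0 : ℝ) < N := by exact_mod_cast hN
    have h1 := hIS N
    have h2 : (N : ℝ) * (c - ↑N₀ * (2 * K) / ↑N) ≤ ↑N * ∫ y, φ' y ∂μ := by
      have h3 : (N : ℝ) * (c - ↑N₀ * (2 * K) / ↑N) = ↑N * c - ↑N₀ * (2 * K) := by
        field_simp
      rw [h3]; exact h1
    exact le_of_mul_le_mul_left h2 hNpos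
  -- compare integrals
  have hEsmall : (K + 1) * (μ E).toReal ≤ ε := by
    have h1 : (μ E).toReal < ε / (K + 1) := by
      have := ENNReal.toReal_lt_of_lt_ofReal hN₀mes
      exact this
    have h2 : (0 : ℝ) < K + 1 := by linarith
    rw [mul_comm, ← le_div_iff₀ h2]
    exact h1.le
  have hφ'le : ∫ y, φ' y ∂μ ≤ (∫ y, φ y ∂μ) + ε := by
    have hpt : ∀ x, φ' x ≤ φ x + (K + 1) * E.indicator (fun _ => (1 : ℝ)) x := by
      intro x
      by_cases hx : x ∈ E
      · rw [Set.indicator_of_mem hx]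
        simp only [hφ', hx, if_true]
        have h1 := (abs_le.1 (hC x)).1
        have h2 := le_abs_self c
        refine max_le (by linarith [hK0]) (by rw [hK] at *; linarith)
      · rw [Set.indicator_of_notMem hx]
        simp [hφ', hx]
    have hind : Integrable (fun x => φ x + (K + 1) * E.indicator (fun _ => (1 : ℝ)) x) μ := by
      refine (integrable_of_bdd hφ hC).add ?_
      exact (((integrable_const (1 : ℝ)).indicator hEmes).const_mul (K + 1))
    have h2 := integral_mono hφ'int hind hpt
    have h3 : ∫ x, (φ x + (K + 1) * E.indicator (fun _ => (1 : ℝ)) x) ∂μ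
        = (∫ y, φ y ∂μ) + (K + 1) * (μ E).toReal := by
      rw [integral_add (integrable_of_bdd hφ hC)
        (((integrable_const (1 : ℝ)).indicator hEmes).const_mul (K + 1))]
      rw [integral_const_mul, integral_indicator_const (1 : ℝ) hEmes]
      simp [mul_comm, measureReal_def]
    rw [h3] at h2
    nlinarith [hEsmall]
  linarith


lemma freq_subset_preimage {f : α → α} {φ : α → ℝ} {C : ℝ} (hC : ∀ x, |φ x| ≤ C)
    {r r' : ℝ} (h : r' < r) :
    {x | ∀ N : ℕ, ∃ n : ℕ, N ≤ n ∧ (n : ℝ) * r < birkhoffSumS f φ n x}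
      ⊆ f ⁻¹' {x | ∀ N : ℕ, ∃ n : ℕ, N ≤ n ∧ (n : ℝ) * r' < birkhoffSumS f φ n x} := by
  intro x hx
  intro N
  obtain ⟨M, hM⟩ := exists_nat_gt ((C + |r|) / (r - r'))
  obtain ⟨m, hm, hlt⟩ := hx (max (N + 1) (M + 1))
  have hm1 : N + 1 ≤ m := le_trans (le_max_left _ _) hm
  have hmM : M + 1 ≤ m := le_trans (le_max_right _ _) hm
  obtain ⟨n, rfl⟩ : ∃ n, m = n + 1 := ⟨m - 1, by omega⟩
  refine ⟨n, by omega, ?_⟩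
  rw [bS_succ'] at hlt
  have hφx := abs_le.1 (hC x)
  have hrr' : (0 : ℝ) < r - r' := sub_pos.2 h
  have hMr : C + |r| < M * (r - r') := (div_lt_iff₀ hrr').1 hM
  have hn : (M : ℝ) ≤ n := by exact_mod_cast (by omega : M ≤ n)
  have habsr := le_abs_self r
  have hnegr := neg_abs_le r
  push_cast at hlt
  nlinarith [mul_le_mul_of_nonneg_right hn hrr'.le]

lemma preimage_freq_subset {f : α → α} {φ : α → ℝ} {C : ℝ} (hC : ∀ x, |φ x| ≤ C)
    {r r' : ℝ} (h : r' < r) :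
    f ⁻¹' {x | ∀ N : ℕ, ∃ n : ℕ, N ≤ n ∧ (n : ℝ) * r < birkhoffSumS f φ n x}
      ⊆ {x | ∀ N : ℕ, ∃ n : ℕ, N ≤ n ∧ (n : ℝ) * r' < birkhoffSumS f φ n x} := by
  intro x hx
  intro N
  obtain ⟨M, hM⟩ := exists_nat_gt ((C + |r'|) / (r - r'))
  obtain ⟨m, hm, hlt⟩ := hx (max N M)
  have hm1 : N ≤ m := le_trans (le_max_left _ _) hm
  have hmM : M ≤ m := le_trans (le_max_right _ _) hm
  refine ⟨m + 1, by omega, ?_⟩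
  rw [bS_succ']
  have hφx := abs_le.1 (hC x)
  have hrr' : (0 : ℝ) < r - r' := sub_pos.2 h
  have hMr : C + |r'| < M * (r - r') := (div_lt_iff₀ hrr').1 hM
  have hn : (M : ℝ) ≤ m := by exact_mod_cast hmM
  have habsr := le_abs_self r'
  have hnegr := neg_abs_le r'
  push_cast
  nlinarith [mul_le_mul_of_nonneg_right hn hrr'.le]

lemma ergodic_limsup_le [IsProbabilityMeasure μ] {f : α → α} (hf : Ergodic f μ)
    {φ : α → ℝ} (hφ : Measurable φ) {C : ℝ} (hC : ∀ x, |φ x| ≤ C) :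
    ∀ᵐ x ∂μ, ∀ ε : ℝ, 0 < ε →
      ∀ᶠ n : ℕ in atTop, birkhoffSumS f φ n x ≤ n * ((∫ y, φ y ∂μ) + ε) := by
  have hfm : Measurable f := hf.toMeasurePreserving.measurable
  set I := ∫ y, φ y ∂μ with hI
  have hmain : ∀ ε : ℝ, 0 < ε →
      ∀ᵐ x ∂μ, ∀ᶠ n : ℕ in atTop, birkhoffSumS f φ n x ≤ n * (I + ε) := by
    intro ε hε
    set A : ℝ → Set α :=
      fun r => {x | ∀ N : ℕ, ∃ n : ℕ, N ≤ n ∧ (n : ℝ) * r < birkhoffSumS f φ n x} with hA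
    have hAm : ∀ r, MeasurableSet (A r) := by
      intro r
      have : A r = ⋂ N : ℕ, ⋃ n : ℕ, ⋃ (_ : N ≤ n), {x | (n : ℝ) * r < birkhoffSumS f φ n x} := by
        ext x; simp [hA]
      rw [this]
      exact MeasurableSet.iInter fun N => MeasurableSet.iUnion fun n =>
        MeasurableSet.iUnion fun _ =>
          measurableSet_lt measurable_const (measurable_bS hfm hφ n)
    set D : Set α := ⋂ (q : ℚ) (_ : I + ε / 2 < (q : ℝ) ∧ (q : ℝ) < I + ε), A q with hD
    have hDm : MeasurableSet D :=
      MeasurableSet.iInter fun q => MeasurableSet.iInter fun _ => hAm q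
    have hDinv : f ⁻¹' D = D := by
      apply Set.Subset.antisymm
      · intro x hx
        simp only [hD, Set.mem_preimage, Set.mem_iInter] at hx ⊢
        intro q hq
        obtain ⟨q'', hq1, hq2⟩ := exists_rat_btwn hq.2
        have h1 : f x ∈ A q'' := hx q'' ⟨lt_trans hq.1 (by exact_mod_cast hq1), hq2⟩
        exact preimage_freq_subset hC (show ((q : ℝ) : ℝ) < q'' by exact_mod_cast hq1) h1
      · intro x hx
        simp only [hD, Set.mem_preimage, Set.mem_iInter] at hx ⊢
        intro q hq
        obtain ⟨q'', hq1, hq2⟩ := exists_rat_btwn hq.2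
        have h1 : x ∈ A q'' := hx q'' ⟨lt_trans hq.1 (by exact_mod_cast hq1), hq2⟩
        exact freq_subset_preimage hC (show ((q : ℝ) : ℝ) < q'' by exact_mod_cast hq1) h1
    rcases hf.ae_empty_or_univ hDm hDinv with h0 | h1
    · have hae : ∀ᵐ x ∂μ, x ∉ D := by
        have h2 : μ D = 0 := ae_eq_empty.1 h0
        exact measure_eq_zero_iff_ae_notMem.1 h2
      filter_upwards [hae] with x hx
      simp only [hD, Set.mem_iInter, not_forall] at hx
      obtain ⟨q, hqw, hq⟩ := hx
      simp only [hA, Set.mem_setOf_eq, not_forall, not_exists, not_and, not_lt] at hq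
      obtain ⟨N, hN⟩ := hq
      refine eventually_atTop.2 ⟨N, fun n hn => ?_⟩
      calc birkhoffSumS f φ n x ≤ n * q := hN n hn
        _ ≤ n * (I + ε) := mul_le_mul_of_nonneg_left hqw.2.le (Nat.cast_nonneg n)
    · exfalso
      obtain ⟨q₀, hq1, hq2⟩ := exists_rat_btwn (show I + ε / 2 < I + ε by linarith)
      have hae : ∀ᵐ x ∂μ, x ∈ D := by
        have h2 : μ Dᶜ = 0 := ae_eq_univ.1 h1
        rw [ae_iff]
        exact h2
      have hkc : ∀ᵐ x ∂μ, ∃ n : ℕ, 1 ≤ n ∧ (n : ℝ) * (I + ε / 2) ≤ birkhoffSumS f φ n x := by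
        filter_upwards [hae] with x hx
        have h2 : x ∈ A q₀ := by
          simp only [hD, Set.mem_iInter] at hx
          exact hx q₀ ⟨hq1, hq2⟩
        obtain ⟨n, hn1, hlt⟩ := h2 1
        exact ⟨n, hn1, le_trans
          (mul_le_mul_of_nonneg_left hq1.le (Nat.cast_nonneg n)) hlt.le⟩
      have h3 := kw_core hf.toMeasurePreserving hφ hC hkc
      rw [← hI] at h3
      linarith
  have hctble : ∀ᵐ x ∂μ, ∀ k : ℕ,
      ∀ᶠ n : ℕ in atTop, birkhoffSumS f φ n x ≤ n * (I + 1 / ((k : ℝ) + 1)) :=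
    ae_all_iff.2 fun k => hmain (1 / ((k : ℝ) + 1)) (by positivity)
  filter_upwards [hctble] with x hx ε hε
  obtain ⟨k, hk⟩ := exists_nat_one_div_lt hε
  filter_upwards [hx k] with n hn
  calc birkhoffSumS f φ n x ≤ n * (I + 1 / ((k : ℝ) + 1)) := hn
    _ ≤ n * (I + ε) := by
        refine mul_le_mul_of_nonneg_left ?_ (Nat.cast_nonneg n)
        linarith [hk]

lemma ergodic_liminf_ge [IsProbabilityMeasure μ] {f : α → α} (hf : Ergodic f μ)
    {φ : α → ℝ} (hφ : Measurable φ) {C : ℝ} (hC : ∀ x, |φ x| ≤ C) :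
    ∀ᵐ x ∂μ, ∀ ε : ℝ, 0 < ε →
      ∀ᶠ n : ℕ in atTop, (n : ℝ) * ((∫ y, φ y ∂μ) - ε) ≤ birkhoffSumS f φ n x := by
  have h := ergodic_limsup_le hf hφ.neg (C := C) (fun x => by simpa using hC x)
  have hneg : ∫ y, (-φ) y ∂μ = -∫ y, φ y ∂μ := integral_neg φ
  filter_upwards [h] with x hx ε hε
  filter_upwards [hx ε hε] with n hn
  have hS : birkhoffSumS f (-φ) n x = -birkhoffSumS f φ n x := by
    simp [birkhoffSumS]
  rw [hneg, hS] at hn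
  have h2 : -birkhoffSumS f φ n x ≤ (n : ℝ) * (-(∫ y, φ y ∂μ) + ε) := by
    calc -birkhoffSumS f φ n x ≤ (n : ℝ) * (-∫ y, φ y ∂μ + ε) := hn
      _ = (n : ℝ) * (-(∫ y, φ y ∂μ) + ε) := by ring
  have h3 : (n : ℝ) * ((∫ y, φ y ∂μ) - ε) = -((n : ℝ) * (-(∫ y, φ y ∂μ) + ε)) := by ring
  rw [h3]
  linarith


lemma ergodic_returns [IsProbabilityMeasure μ] {f : α → α} (hf : Ergodic f μ)
    {A : Set α} (hAm : MeasurableSet A) (hA : μ A ≠ 0) {γ : ℝ} (hγ : 0 < γ) :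
    ∀ᵐ x ∂μ, ∀ᶠ n : ℕ in atTop,
      ∃ q : ℕ, n ≤ q ∧ (q : ℝ) ≤ (1 + γ) * n ∧ f^[q] x ∈ A := by
  classical
  set h : α → ℝ := A.indicator 1 with hh
  have hhm : Measurable h := measurable_one.indicator hAm
  have hhb : ∀ x, |h x| ≤ 1 := by
    intro x
    rw [hh, Set.indicator_apply]
    by_cases hx : x ∈ A <;> simp [hx]
  have hIeq : ∫ y, h y ∂μ = (μ A).toReal := by
    rw [hh]; exact integral_indicator_one hAm
  set a := (μ A).toReal with ha
  have ha0 : 0 < a := ENNReal.toReal_pos hA (measure_ne_top μ A)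
  set ε := γ * a / (2 * (2 + γ)) with hε
  have hε0 : 0 < ε := by positivity
  have hεa : ε < a := by
    rw [hε, div_lt_iff₀ (by positivity)]
    nlinarith
  have hkey : γ * a - ε * (2 + γ) = γ * a / 2 := by
    rw [hε]; field_simp; ring
  filter_upwards [ergodic_limsup_le hf hhm hhb, ergodic_liminf_ge hf hhm hhb] with x hup hlo
  obtain ⟨N₁, hN₁⟩ := eventually_atTop.1 ((hup ε hε0).and (hlo ε hε0))
  have hγn : ∀ᶠ n : ℕ in atTop, (1 : ℝ) ≤ γ * n := by
    obtain ⟨m, hm⟩ := exists_nat_gt (1 / γ)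
    refine eventually_atTop.2 ⟨m, fun n hn => ?_⟩
    have h1 : 1 / γ < (n : ℝ) := lt_of_lt_of_le hm (by exact_mod_cast hn)
    rw [div_lt_iff₀ hγ] at h1
    linarith
  filter_upwards [eventually_ge_atTop (max N₁ 1), hγn] with n hn h1γ
  have hnN₁ : N₁ ≤ n := le_trans (le_max_left _ _) hn
  have hn1 : 1 ≤ n := le_trans (le_max_right _ _) hn
  set Q := Nat.floor ((1 + γ) * (n : ℝ)) with hQ
  have hnpos : (0 : ℝ) < n := by exact_mod_cast hn1
  have h1γn : (0 : ℝ) ≤ (1 + γ) * n := by positivity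
  have hQn : n ≤ Q := Nat.le_floor (by nlinarith)
  have hQle : (Q : ℝ) ≤ (1 + γ) * n := Nat.floor_le h1γn
  have hQ1 : (1 + γ) * (n : ℝ) < Q + 1 := Nat.lt_floor_add_one _
  have hsum : ∑ i ∈ Finset.Ico n (Q + 1), h (f^[i] x)
      = birkhoffSumS f h (Q + 1) x - birkhoffSumS f h n x :=
    Finset.sum_Ico_eq_sub _ (by omega)
  have hub := (hN₁ n hnN₁).1
  have hlb := (hN₁ (Q + 1) (by omega)).2
  rw [hIeq] at hub hlb
  have hpos : 0 < ∑ i ∈ Finset.Ico n (Q + 1), h (f^[i] x) := by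
    rw [hsum]
    have c1 : ((Q : ℝ) + 1) * (a - ε) ≤ birkhoffSumS f h (Q + 1) x := by
      push_cast at hlb ⊢
      linarith
    have c2 : (1 + γ) * (n : ℝ) * (a - ε) < ((Q : ℝ) + 1) * (a - ε) := by
      have := sub_pos.2 hεa
      nlinarith
    have expand : (1 + γ) * (n : ℝ) * (a - ε) - n * (a + ε) = n * (γ * a / 2) := by
      rw [← hkey]; ring
    have hfin : (0 : ℝ) < (n : ℝ) * (γ * a / 2) := by positivity
    linarith
  obtain ⟨i, hiIco, hi0⟩ := Finset.exists_ne_zero_of_sum_ne_zero (ne_of_gt hpos)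
  rw [Finset.mem_Ico] at hiIco
  refine ⟨i, hiIco.1, ?_, ?_⟩
  · calc (i : ℝ) ≤ Q := by exact_mod_cast Nat.lt_succ_iff.1 hiIco.2
      _ ≤ (1 + γ) * n := hQle
  · by_contra hmem
    rw [hh, Set.indicator_of_notMem hmem] at hi0
    exact hi0 rfl

lemma tendsto_measure_of_eventually_mem {Λ : ℕ → Set α} {B : Set α}
    (hsub : ∀ n, Λ n ⊆ B)
    (hae : ∀ᵐ x ∂μ, x ∈ B → ∀ᶠ n in atTop, x ∈ Λ n) :
    Tendsto (fun n => μ (Λ n)) atTop (nhds (μ B)) := by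
  set Cs : ℕ → Set α := fun N => ⋂ (n : ℕ) (_ : N ≤ n), Λ n with hCs
  have hmono : Monotone Cs := by
    intro N N' hNN' x hx
    simp only [hCs, Set.mem_iInter] at hx ⊢
    exact fun n hn => hx n (hNN'.trans hn)
  have hUB : μ (⋃ N, Cs N) = μ B := by
    apply le_antisymm
    · refine measure_mono (Set.iUnion_subset fun N => ?_)
      intro x hx
      simp only [hCs, Set.mem_iInter] at hx
      exact hsub N (hx N le_rfl)
    · refine measure_mono_ae ?_
      filter_upwards [hae] with x hx hxB
      obtain ⟨N, hN⟩ := eventually_atTop.1 (hx hxB)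
      refine Set.mem_iUnion.2 ⟨N, ?_⟩
      simp only [hCs, Set.mem_iInter]
      exact fun n hn => hN n hn
  have htend : Tendsto (fun N => μ (Cs N)) atTop (nhds (μ B)) := by
    have h1 := tendsto_measure_iUnion_atTop (μ := μ) hmono
    rw [hUB] at h1
    exact h1
  refine tendsto_of_tendsto_of_tendsto_of_le_of_le htend tendsto_const_nhds ?_ ?_
  · intro n
    refine measure_mono fun x hx => ?_
    simp only [hCs, Set.mem_iInter] at hx
    exact hx n le_rfl
  · intro n
    exact measure_mono (hsub n)

end KWAux

variable {E : Type*} [NormedAddCommGroup E] [NormedSpace ℝ E]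
  {H : Type*} [TopologicalSpace H] (I : ModelWithCorners ℝ E H)
  {M : Type*} [MetricSpace M] [ChartedSpace H M]

/-- Lemma 3.4. Let `f` be a `C¹` diffeomorphism of a compact Riemannian
manifold, `μ` ergodic, `B` measurable with `μ(B) > 0`, and `ξ` a finite Borel partition of `M`
refining `{B, M∖B}`. For continuous `φ, ψ` and `γ, δ > 0`, setting
`Λ₁ⁿ = {x ∈ B : f^q(x) ∈ ξ(x) for some integer q ∈ [n,(1+γ)n]}` and
`Λ₂ⁿ = {x ∈ B : S_mψ(x) ≤ m(∫ψ dμ + γ) and S_mφ(x) ≥ m(∫φ dμ - δ) for all m ≥ n}`,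
one has `lim_n μ(Λ₁ⁿ ∩ Λ₂ⁿ) = μ(B)`. -/
theorem good_returns_full_measure
    [FiniteDimensional ℝ E] [I.Boundaryless] [CompactSpace M] [IsManifold I (⊤ : ℕ∞) M]
    [MeasurableSpace M] [BorelSpace M]
    (f : Equiv.Perm M) (hf : IsC1Diffeo I f)
    (μ : Measure M) [IsProbabilityMeasure μ] (hμ : Ergodic f μ)
    (B : Set M) (hBm : MeasurableSet B) (hB : 0 < μ B)
    (ξ : Finset (Set M)) (hξm : ∀ A ∈ ξ, MeasurableSet A)
    (hξcov : ⋃₀ (ξ : Set (Set M)) = Set.univ)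
    (hξdisj : (ξ : Set (Set M)).PairwiseDisjoint id)
    (hξref : ∀ A ∈ ξ, A ⊆ B ∨ A ⊆ Bᶜ)
    (φ ψ : M → ℝ) (hφ : Continuous φ) (hψ : Continuous ψ)
    (γ δ : ℝ) (hγ : 0 < γ) (hδ : 0 < δ) :
    Filter.Tendsto
      (fun n : ℕ => μ
        ({x ∈ B | ∃ q : ℕ, (n : ℝ) ≤ q ∧ (q : ℝ) ≤ (1 + γ) * n ∧
            ∃ A ∈ ξ, x ∈ A ∧ f^[q] x ∈ A} ∩
         {x ∈ B | ∀ m : ℕ, n ≤ m →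
            birkhoffSumS f ψ m x ≤ m * ((∫ y, ψ y ∂μ) + γ) ∧
            m * ((∫ y, φ y ∂μ) - δ) ≤ birkhoffSumS f φ m x}))
      Filter.atTop (nhds (μ B)) := by
  classical
  have hfm : Measurable (f : M → M) := hμ.toMeasurePreserving.measurable
  haveI hMne : Nonempty M := by
    by_contra hne
    rw [not_nonempty_iff] at hne
    have h0 : μ Set.univ = 0 := by rw [Set.univ_eq_empty_iff.2 hne]; exact measure_empty
    rw [measure_univ] at h0
    exact one_ne_zero h0
  obtain ⟨zφ, -, hCφ⟩ :=
    isCompact_univ.exists_isMaxOn Set.univ_nonempty (hφ.abs.continuousOn)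
  obtain ⟨zψ, -, hCψ⟩ :=
    isCompact_univ.exists_isMaxOn Set.univ_nonempty (hψ.abs.continuousOn)
  have hψae := KWAux.ergodic_limsup_le hμ hψ.measurable
    (fun x => hCψ (Set.mem_univ x))
  have hφae := KWAux.ergodic_liminf_ge hμ hφ.measurable
    (fun x => hCφ (Set.mem_univ x))
  have hret : ∀ᵐ x ∂μ, ∀ A ∈ (ξ : Set (Set M)), μ A ≠ 0 →
      ∀ᶠ n : ℕ in atTop, ∃ q : ℕ, n ≤ q ∧ (q : ℝ) ≤ (1 + γ) * n ∧ f^[q] x ∈ A := by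
    rw [ae_ball_iff ξ.countable_toSet]
    intro A hA
    by_cases hA0 : μ A = 0
    · exact ae_of_all _ fun x h0 => absurd hA0 h0
    · exact (KWAux.ergodic_returns hμ (hξm A (Finset.mem_coe.1 hA)) hA0 hγ).mono
        fun x hx _ => hx
  have hnull : ∀ᵐ x ∂μ, ∀ A ∈ (ξ : Set (Set M)), μ A = 0 → x ∉ A := by
    rw [ae_ball_iff ξ.countable_toSet]
    intro A hA
    by_cases hA0 : μ A = 0
    · exact (measure_eq_zero_iff_ae_notMem.1 hA0).mono fun x hx _ => hx
    · exact ae_of_all _ fun x h0 => absurd h0 hA0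
  refine KWAux.tendsto_measure_of_eventually_mem (fun n x hx => hx.1.1) ?_
  filter_upwards [hψae, hφae, hret, hnull] with x h1 h2 h3 h4 hxB
  obtain ⟨A, hAξ, hxA⟩ : ∃ A ∈ (ξ : Set (Set M)), x ∈ A := by
    have hx : x ∈ ⋃₀ (ξ : Set (Set M)) := by rw [hξcov]; exact Set.mem_univ x
    exact Set.mem_sUnion.1 hx
  have hA0 : μ A ≠ 0 := fun h0 => h4 A hAξ h0 hxA
  obtain ⟨N₁, hN₁⟩ := eventually_atTop.1 ((h1 γ hγ).and (h2 δ hδ))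
  filter_upwards [h3 A hAξ hA0, eventually_ge_atTop N₁] with n hn hnN
  refine ⟨⟨hxB, ?_⟩, ⟨hxB, ?_⟩⟩
  · obtain ⟨q, hq1, hq2, hq3⟩ := hn
    exact ⟨q, Nat.cast_le.2 hq1, hq2, A, Finset.mem_coe.1 hAξ, hxA, hq3⟩
  · intro m hm
    have h5 := hN₁ m (hnN.trans hm)
    exact ⟨h5.1, h5.2⟩


end
end

section
/- Let f: M → M be a C¹ diffeomorphism of a compact Riemannian manifold, μ an ergodic f-invariant Borel probability measure, B ⊆ M measurable with μ(B) > 0, ξ a finite Borel partition of M refining {B, M∖B}, and γ > 0. Then for μ-almost every x ∈ B, for all sufficiently large n ∈ ℕ there exists an integer q ∈ [n, (1+γ)n] with f^q(x) ∈ ξ(x), where ξ(x) is the element of ξ containing x; consequently, with Λ₁ⁿ = {x ∈ B : f^q(x) ∈ ξ(x) for some integer q ∈ [n,(1+γ)n]}, one has lim_{n→∞} μ(Λ₁ⁿ) = μ(B). -/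
open MeasureTheory Filter Set Manifold ProbabilityTheory
open Topology ENNReal

noncomputable section

section AuxBirkhoff


lemma cover_lemma (ψ : ℕ → ℝ) (hψ : ∀ k, 0 ≤ ψ k) {L : ℝ} (hL : 0 ≤ L) (N : ℕ)
    (Good : ℕ → Prop) [DecidablePred Good]
    (hGood : ∀ a, Good a → ∃ n, 1 ≤ n ∧ n ≤ N ∧
      L * n ≤ ∑ k ∈ Finset.Ico a (a + n), ψ k) :
    ∀ M a, L * ((Finset.Ico a (a + M)).filter Good).card
      ≤ ∑ k ∈ Finset.Ico a (a + M + N), ψ k := by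
  intro M
  induction M using Nat.strong_induction_on with
  | _ M IH =>
  intro a
  rcases Nat.eq_zero_or_pos M with hM | hM
  · subst hM
    simp only [Nat.add_zero, Finset.Ico_self, Finset.filter_empty, Finset.card_empty,
      Nat.cast_zero, mul_zero]
    exact Finset.sum_nonneg fun k _ => hψ k
  by_cases hGa : Good a
  · obtain ⟨n, hn1, hnN, hsum⟩ := hGood a hGa
    by_cases hnM : M ≤ n
    · have hcard : ((Finset.Ico a (a + M)).filter Good).card ≤ n := by
        calc ((Finset.Ico a (a + M)).filter Good).card ≤ (Finset.Ico a (a + M)).card :=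
              Finset.card_filter_le _ _
          _ = M := by rw [Nat.card_Ico]; omega
          _ ≤ n := hnM
      calc L * ((Finset.Ico a (a + M)).filter Good).card ≤ L * n := by
            apply mul_le_mul_of_nonneg_left _ hL; exact_mod_cast hcard
        _ ≤ ∑ k ∈ Finset.Ico a (a + n), ψ k := hsum
        _ ≤ ∑ k ∈ Finset.Ico a (a + M + N), ψ k := by
            apply Finset.sum_le_sum_of_subset_of_nonneg
            · apply Finset.Ico_subset_Ico le_rfl; omega
            · exact fun k _ _ => hψ k
    · push_neg at hnM
      have hsplit : Finset.Ico a (a + M) = Finset.Ico a (a + n) ∪ Finset.Ico (a + n) (a + M) :=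
        (Finset.Ico_union_Ico_eq_Ico (by omega) (by omega)).symm
      have hdisj : Disjoint ((Finset.Ico a (a + n)).filter Good)
          (((Finset.Ico (a + n) (a + M))).filter Good) := by
        apply Finset.disjoint_filter_filter
        exact Finset.Ico_disjoint_Ico_consecutive a (a + n) (a + M)
      have hcards : ((Finset.Ico a (a + M)).filter Good).card
          = ((Finset.Ico a (a + n)).filter Good).card
            + ((Finset.Ico (a + n) (a + M)).filter Good).card := by
        rw [hsplit, Finset.filter_union, Finset.card_union_of_disjoint hdisj]
      have hc1 : ((Finset.Ico a (a + n)).filter Good).card ≤ n := by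
        calc _ ≤ (Finset.Ico a (a + n)).card := Finset.card_filter_le _ _
          _ = n := by rw [Nat.card_Ico]; omega
      have hIH := IH (M - n) (by omega) (a + n)
      rw [show a + n + (M - n) = a + M by omega]
        at hIH
      have hsum2 : ∑ k ∈ Finset.Ico a (a + n), ψ k + ∑ k ∈ Finset.Ico (a + n) (a + M + N), ψ k
          = ∑ k ∈ Finset.Ico a (a + M + N), ψ k :=
        Finset.sum_Ico_consecutive _ (by omega) (by omega)
      rw [hcards]
      push_cast
      calc L * (((Finset.Ico a (a + n)).filter Good).card
            + ((Finset.Ico (a + n) (a + M)).filter Good).card : ℝ)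
          = L * ((Finset.Ico a (a + n)).filter Good).card
            + L * ((Finset.Ico (a + n) (a + M)).filter Good).card := by ring
        _ ≤ L * n + ∑ k ∈ Finset.Ico (a + n) (a + M + N), ψ k :=
            add_le_add (mul_le_mul_of_nonneg_left (by exact_mod_cast hc1) hL) hIH
        _ ≤ ∑ k ∈ Finset.Ico a (a + n), ψ k + ∑ k ∈ Finset.Ico (a + n) (a + M + N), ψ k :=
            add_le_add hsum le_rfl
        _ = _ := hsum2
  · have heq : (Finset.Ico a (a + M)).filter Good
        = (Finset.Ico (a + 1) ((a + 1) + (M - 1))).filter Good := by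
      ext k
      simp only [Finset.mem_filter, Finset.mem_Ico]
      constructor
      · rintro ⟨⟨h1, h2⟩, hg⟩
        have hka : k ≠ a := by rintro rfl; exact hGa hg
        exact ⟨⟨by omega, by omega⟩, hg⟩
      · rintro ⟨⟨h1, h2⟩, hg⟩
        exact ⟨⟨by omega, by omega⟩, hg⟩
    rw [heq]
    calc L * (((Finset.Ico (a + 1) ((a + 1) + (M - 1))).filter Good).card : ℝ)
        ≤ ∑ k ∈ Finset.Ico (a + 1) ((a + 1) + (M - 1) + N), ψ k := IH (M - 1) (by omega) (a + 1)
      _ ≤ ∑ k ∈ Finset.Ico a (a + M + N), ψ k := by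
          apply Finset.sum_le_sum_of_subset_of_nonneg
          · apply Finset.Ico_subset_Ico <;> omega
          · exact fun k _ _ => hψ k

section Birkhoff

variable {α : Type*} [MeasurableSpace α] {T : α → α} {μ : MeasureTheory.Measure α}
  [IsProbabilityMeasure μ]

theorem limsup_birkhoff_le (hT : Ergodic T μ) (hTe : MeasurableEmbedding T)
    {A : Set α} (hA : MeasurableSet A) :
    ∀ᵐ x ∂μ, limsup (fun n => birkhoffSum T (A.indicator (1 : α → ℝ)) n x / n) atTop
      ≤ (μ A).toReal := by
  set φ : α → ℝ := A.indicator 1 with hφdef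
  have hφm : Measurable φ := measurable_one.indicator hA
  have hφ0 : ∀ y, 0 ≤ φ y := fun y => Set.indicator_nonneg (fun _ _ => zero_le_one) y
  have hφ1 : ∀ y, φ y ≤ 1 := by
    intro y; by_cases hy : y ∈ A <;> simp [hφdef, Set.indicator_apply, hy]
  have hTm : Measurable T := hTe.measurable
  have hTk : ∀ k, Measurable (T^[k]) := fun k => hTm.iterate k
  have hTek : ∀ k, MeasurableEmbedding (T^[k]) := by
    intro k
    induction k with
    | zero => exact MeasurableEmbedding.id
    | succ k ih => rw [Function.iterate_succ]; exact ih.comp hTe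
  have hSm : ∀ n, Measurable (fun x => birkhoffSum T φ n x) := fun n =>
    Finset.measurable_sum _ fun k _ => hφm.comp (hTk k)
  have hS0 : ∀ n x, 0 ≤ birkhoffSum T φ n x := fun n x =>
    Finset.sum_nonneg fun k _ => hφ0 _
  have hSn : ∀ n x, birkhoffSum T φ n x ≤ n := by
    intro n x
    calc birkhoffSum T φ n x ≤ ∑ _k ∈ Finset.range n, (1 : ℝ) :=
          Finset.sum_le_sum fun k _ => hφ1 _
      _ = n := by simp
  set u : α → ℕ → ℝ := fun x n => birkhoffSum T φ n x / n with hudef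
  have hu0 : ∀ x n, 0 ≤ u x n := fun x n => div_nonneg (hS0 n x) n.cast_nonneg
  have hu1 : ∀ x n, u x n ≤ 1 := by
    intro x n
    rcases Nat.eq_zero_or_pos n with rfl | hn
    · simp [hudef]
    · rw [hudef]
      exact div_le_one_of_le₀ (hSn n x) n.cast_nonneg
  have hubdd : ∀ x, IsBoundedUnder (· ≤ ·) atTop (u x) :=
    fun x => isBoundedUnder_of ⟨1, hu1 x⟩
  have hubdd' : ∀ x, IsBoundedUnder (· ≥ ·) atTop (u x) :=
    fun x => isBoundedUnder_of ⟨0, hu0 x⟩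
  set ℓ : α → ℝ := fun x => limsup (u x) atTop with hℓdef
  have hℓm : Measurable ℓ := Measurable.limsup fun n => (hSm n).div_const _
  -- invariance
  have hℓT : ∀ x, ℓ (T x) = ℓ x := by
    intro x
    set d : ℕ → ℝ := fun n => (φ (T^[n] x) - φ x) / n with hddef
    have hrel : u (T x) = u x + d := by
      funext n
      have h1 := birkhoffSum_apply_sub_birkhoffSum T φ n x
      have h2 : birkhoffSum T φ n (T x) = birkhoffSum T φ n x + (φ (T^[n] x) - φ x) := by
        linarith
      simp only [hudef, hddef, Pi.add_apply, h2, add_div]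
    have hd : Tendsto d atTop (𝓝 0) := by
      apply squeeze_zero_norm (a := fun n : ℕ => 1 / n) ?_
        (tendsto_one_div_atTop_nhds_zero_nat)
      intro n
      have habs : |φ (T^[n] x) - φ x| ≤ 1 := by
        rw [abs_sub_le_iff]
        constructor <;> linarith [hφ0 x, hφ1 x, hφ0 (T^[n] x), hφ1 (T^[n] x)]
      rw [hddef]
      simp only [norm_div, Real.norm_eq_abs, Nat.abs_cast]
      rcases Nat.eq_zero_or_pos n with rfl | hn
      · simp
      · gcongr
    have hdbdd : IsBoundedUnder (· ≤ ·) atTop d := hd.isBoundedUnder_le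
    have hdbdd' : IsBoundedUnder (· ≥ ·) atTop d := hd.isBoundedUnder_ge
    have hndbdd : IsBoundedUnder (· ≤ ·) atTop (-d) := hd.neg.isBoundedUnder_le
    have hndbdd' : IsBoundedUnder (· ≥ ·) atTop (-d) := hd.neg.isBoundedUnder_ge
    have e1 : limsup (u (T x)) atTop ≤ limsup (u x) atTop := by
      calc limsup (u (T x)) atTop = limsup (u x + d) atTop := by rw [hrel]
        _ ≤ limsup (u x) atTop + limsup d atTop :=
            limsup_add_le (hubdd' x) (hubdd x) hdbdd'.isCoboundedUnder_le hdbdd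
        _ = limsup (u x) atTop := by rw [hd.limsup_eq, add_zero]
    have e2 : limsup (u x) atTop ≤ limsup (u (T x)) atTop := by
      have hrel2 : u x = u (T x) + (-d) := by rw [hrel]; abel
      calc limsup (u x) atTop = limsup (u (T x) + (-d)) atTop := by rw [hrel2]
        _ ≤ limsup (u (T x)) atTop + limsup (-d) atTop :=
            limsup_add_le (hubdd' (T x)) (hubdd (T x)) hndbdd'.isCoboundedUnder_le hndbdd
        _ = limsup (u (T x)) atTop := by
            have : limsup (-d) atTop = 0 := by
              have := hd.neg.limsup_eq
              rw [neg_zero] at this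
              exact this
            rw [this, add_zero]
    exact le_antisymm e1 e2

  -- the limsup is a.e. constant
  obtain ⟨c, hc⟩ := hT.toPreErgodic.ae_eq_const_of_ae_eq_comp hℓm (funext hℓT)
  have haene : (MeasureTheory.ae μ).NeBot := ae_neBot.mpr (IsProbabilityMeasure.ne_zero μ)
  suffices hcle : c ≤ (μ A).toReal by
    filter_upwards [hc] with x hx
    calc limsup (fun n => birkhoffSum T φ n x / n) atTop = ℓ x := rfl
      _ = c := hx
      _ ≤ (μ A).toReal := hcle
  -- main estimate: ∀ ε > 0, c ≤ μ A + ε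
  apply _root_.le_of_forall_pos_le_add
  intro ε hε
  set L : ℝ := c - ε with hLdef
  rcases le_or_gt L 0 with hL0 | hL0
  · have := ENNReal.toReal_nonneg (a := μ A)
    linarith
  -- the sets E N
  set E : ℕ → Set α := fun N => {x | ∃ n, 1 ≤ n ∧ n ≤ N ∧ L * n ≤ birkhoffSum T φ n x}
    with hEdef
  have hEm : ∀ N, MeasurableSet (E N) := by
    intro N
    have : E N = ⋃ n, ⋃ (_ : 1 ≤ n ∧ n ≤ N), {x | L * n ≤ birkhoffSum T φ n x} := by
      ext x
      simp [hEdef, Set.mem_iUnion, and_assoc]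
    rw [this]
    exact MeasurableSet.iUnion fun n => MeasurableSet.iUnion fun _ =>
      measurableSet_le measurable_const (hSm n)
  have hEmono : Monotone E := by
    intro N N' hNN x hx
    obtain ⟨n, h1, h2, h3⟩ := hx
    exact ⟨n, h1, h2.trans hNN, h3⟩
  -- integral facts
  have hcompind : ∀ (S : Set α) (k : ℕ),
      (fun x => S.indicator (1 : α → ℝ) (T^[k] x)) = (T^[k] ⁻¹' S).indicator 1 := by
    intro S k
    ext x
    by_cases h : T^[k] x ∈ S <;>
      simp [Set.indicator_apply, h, Set.mem_preimage]
  have hint : ∀ (S : Set α), MeasurableSet S → ∀ k : ℕ,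
      Integrable (fun x => S.indicator (1 : α → ℝ) (T^[k] x)) μ := by
    intro S hS k
    rw [hcompind S k]
    exact (integrable_indicator_iff ((hTk k) hS)).2
      ((integrableOn_const_iff).2 (Or.inr (measure_lt_top μ _)))
  have hintval : ∀ (S : Set α), MeasurableSet S → ∀ k : ℕ,
      ∫ x, S.indicator (1 : α → ℝ) (T^[k] x) ∂μ = (μ S).toReal := by
    intro S hS k
    rw [(hT.toMeasurePreserving.iterate k).integral_comp (hTek k) (S.indicator 1)]
    exact integral_indicator_one hS
  -- the key integral inequality
  have key : ∀ N : ℕ, L * (μ (E N)).toReal ≤ (μ A).toReal := by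
    intro N
    classical
    have hpt : ∀ (M : ℕ) (x : α),
        L * (((Finset.range M).filter (fun k => T^[k] x ∈ E N)).card : ℝ)
          ≤ birkhoffSum T φ (M + N) x := by
      intro M x
      classical
      have hcov := cover_lemma (fun k => φ (T^[k] x)) (fun k => hφ0 _) hL0.le N
        (fun k => T^[k] x ∈ E N) ?_ M 0
      · simp only [zero_add] at hcov
        rw [← Finset.range_eq_Ico, ← Finset.range_eq_Ico] at hcov
        exact hcov
      · intro a ha
        obtain ⟨n, h1, h2, h3⟩ := ha
        refine ⟨n, h1, h2, ?_⟩
        rw [Finset.sum_Ico_eq_sum_range]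
        have : ∀ k, φ (T^[a + k] x) = φ (T^[k] (T^[a] x)) := by
          intro k
          rw [add_comm, Function.iterate_add_apply]
        calc L * n ≤ birkhoffSum T φ n (T^[a] x) := h3
          _ = ∑ k ∈ Finset.range (a + n - a), φ (T^[a + k] x) := by
              rw [show a + n - a = n from by omega]
              exact Finset.sum_congr rfl fun k _ => (this k).symm
    -- pointwise restated with indicators
    have hpt' : ∀ (M : ℕ) (x : α),
        L * ∑ k ∈ Finset.range M, (E N).indicator (1 : α → ℝ) (T^[k] x)
          ≤ birkhoffSum T φ (M + N) x := by
      intro M x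
      classical
      have hcard : (((Finset.range M).filter (fun k => T^[k] x ∈ E N)).card : ℝ)
          = ∑ k ∈ Finset.range M, (E N).indicator (1 : α → ℝ) (T^[k] x) := by
        rw [Finset.card_filter]
        push_cast
        exact Finset.sum_congr rfl fun k _ => by
          by_cases h : T^[k] x ∈ E N <;> simp [Set.indicator_apply, h]
      have := hpt M x
      rwa [hcard] at this
    have hineq : ∀ M : ℕ, L * (M * (μ (E N)).toReal) ≤ (M + N : ℕ) * (μ A).toReal := by
      intro M
      have hi1 : Integrable (fun x =>
          L * ∑ k ∈ Finset.range M, (E N).indicator (1 : α → ℝ) (T^[k] x)) μ :=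
        (MeasureTheory.integrable_finset_sum _ fun k _ => hint (E N) (hEm N) k).const_mul L
      have hi2 : Integrable (fun x => birkhoffSum T φ (M + N) x) μ :=
        MeasureTheory.integrable_finset_sum _ fun k _ => hint A hA k
      have hmono := integral_mono hi1 hi2 (fun x => hpt' M x)
      have hv1 : ∫ x, L * ∑ k ∈ Finset.range M, (E N).indicator (1 : α → ℝ) (T^[k] x) ∂μ
          = L * (M * (μ (E N)).toReal) := by
        rw [integral_const_mul, integral_finset_sum _ fun k _ => hint (E N) (hEm N) k]
        congr 1
        rw [Finset.sum_congr rfl fun k _ => hintval (E N) (hEm N) k]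
        simp [mul_comm]
      have hv2 : ∫ x, birkhoffSum T φ (M + N) x ∂μ = (M + N : ℕ) * (μ A).toReal := by
        rw [show (fun x => birkhoffSum T φ (M + N) x)
            = fun x => ∑ k ∈ Finset.range (M + N), φ (T^[k] x) from rfl]
        rw [integral_finset_sum _ fun k _ => hint A hA k]
        rw [Finset.sum_congr rfl fun k _ => hintval A hA k]
        simp [mul_comm]
      rw [hv1] at hmono
      rw [hv2] at hmono
      exact hmono
    -- divide by M and let M → ∞
    have hdiv : ∀ M : ℕ, 1 ≤ M → L * (μ (E N)).toReal ≤ ((M + N : ℕ) : ℝ) / M * (μ A).toReal := by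
      intro M hM
      have hMpos : (0 : ℝ) < M := by exact_mod_cast hM
      have := hineq M
      rw [div_mul_eq_mul_div, le_div_iff₀ hMpos]
      calc L * (μ (E N)).toReal * M = L * (M * (μ (E N)).toReal) := by ring
        _ ≤ ((M + N : ℕ) : ℝ) * (μ A).toReal := this
    have hlim : Tendsto (fun M : ℕ => ((M + N : ℕ) : ℝ) / M * (μ A).toReal) atTop
        (𝓝 ((μ A).toReal)) := by
      have h1 : Tendsto (fun M : ℕ => ((M + N : ℕ) : ℝ) / M) atTop (𝓝 1) := by
        have h2 : (fun M : ℕ => ((M + N : ℕ) : ℝ) / M) =ᶠ[atTop] fun M : ℕ => 1 + (N : ℝ) / M := by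
          filter_upwards [eventually_ge_atTop 1] with M hM
          have hMpos : (0 : ℝ) < M := by exact_mod_cast hM
          push_cast
          field_simp
        rw [tendsto_congr' h2]
        have := tendsto_const_div_atTop_nhds_zero_nat (N : ℝ)
        have h3 := this.const_add (1 : ℝ)
        simpa using h3
      have := h1.mul_const ((μ A).toReal)
      simpa using this
    refine ge_of_tendsto hlim ?_
    filter_upwards [eventually_ge_atTop 1] with M hM
    exact hdiv M hM
  -- a.e. x has ℓ x = c, and such x lie in ⋃ N, E N (since L < c)
  have hsub : {x | ℓ x = c} ⊆ ⋃ N, E N := by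
    intro x hx
    have hlt : L < limsup (u x) atTop := by
      rw [show limsup (u x) atTop = ℓ x from rfl, hx]
      linarith
    have hfreq := frequently_lt_of_lt_limsup ((hubdd' x).isCoboundedUnder_le) hlt
    obtain ⟨n, hn1, hn2⟩ := (hfreq.and_eventually (eventually_ge_atTop 1)).exists
    have hnpos : (0 : ℝ) < n := by exact_mod_cast hn2
    have : L * n ≤ birkhoffSum T φ n x := by
      have := (lt_div_iff₀ hnpos).1 hn1
      linarith
    exact Set.mem_iUnion.2 ⟨n, n, hn2, le_rfl, this⟩
  have hunion : μ (⋃ N, E N) = 1 := by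
    refine le_antisymm prob_le_one ?_
    have hae : μ {x | ¬ ℓ x = c} = 0 := by
      rw [← MeasureTheory.ae_iff]
      exact hc
    have hcover : (Set.univ : Set α) ⊆ (⋃ N, E N) ∪ {x | ¬ ℓ x = c} := by
      intro x _
      by_cases h : ℓ x = c
      · exact Or.inl (hsub h)
      · exact Or.inr h
    calc (1 : ℝ≥0∞) = μ Set.univ := (measure_univ).symm
      _ ≤ μ ((⋃ N, E N) ∪ {x | ¬ ℓ x = c}) := measure_mono hcover
      _ ≤ μ (⋃ N, E N) + μ {x | ¬ ℓ x = c} := measure_union_le _ _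
      _ = μ (⋃ N, E N) := by rw [hae, add_zero]
  have htend : Tendsto (fun N => μ (E N)) atTop (𝓝 (μ (⋃ N, E N))) :=
    tendsto_measure_iUnion_atTop hEmono
  rw [hunion] at htend
  have htoReal : Tendsto (fun N => (μ (E N)).toReal) atTop (𝓝 1) := by
    have h1 := (ENNReal.tendsto_toReal (by norm_num : (1 : ℝ≥0∞) ≠ ⊤)).comp htend
    exact h1
  have hfin : L * 1 ≤ (μ A).toReal :=
    le_of_tendsto (htoReal.const_mul L) (Eventually.of_forall key)
  rw [hLdef] at hfin
  linarith



theorem birkhoff_indicator_tendsto (hT : Ergodic T μ) (hTe : MeasurableEmbedding T)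
    {A : Set α} (hA : MeasurableSet A) :
    ∀ᵐ x ∂μ, Tendsto (fun n => birkhoffSum T (A.indicator (1 : α → ℝ)) n x / n) atTop
      (𝓝 ((μ A).toReal)) := by
  have hS0 : ∀ (S : Set α) (n : ℕ) (x : α), 0 ≤ birkhoffSum T (S.indicator (1 : α → ℝ)) n x :=
    fun S n x => Finset.sum_nonneg fun k _ =>
      Set.indicator_nonneg (fun _ _ => zero_le_one) _
  have hSn : ∀ (S : Set α) (n : ℕ) (x : α), birkhoffSum T (S.indicator (1 : α → ℝ)) n x ≤ n := by
    intro S n x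
    calc birkhoffSum T (S.indicator 1) n x ≤ ∑ _k ∈ Finset.range n, (1 : ℝ) :=
          Finset.sum_le_sum fun k _ => by
            by_cases h : T^[k] x ∈ S <;> simp [Set.indicator_apply, h]
      _ = n := by simp
  have hcompl : ∀ (n : ℕ) (x : α), birkhoffSum T (Aᶜ.indicator (1 : α → ℝ)) n x
      = n - birkhoffSum T (A.indicator (1 : α → ℝ)) n x := by
    intro n x
    rw [eq_sub_iff_add_eq]
    unfold birkhoffSum
    rw [← Finset.sum_add_distrib]
    calc ∑ k ∈ Finset.range n,
          (Aᶜ.indicator (1 : α → ℝ) (T^[k] x) + A.indicator 1 (T^[k] x))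
        = ∑ _k ∈ Finset.range n, (1 : ℝ) := Finset.sum_congr rfl fun k _ => by
          by_cases h : T^[k] x ∈ A <;> simp [Set.indicator_apply, h]
      _ = n := by simp
  have hAc : (μ Aᶜ).toReal = 1 - (μ A).toReal := by
    rw [measure_compl hA (measure_ne_top μ A), measure_univ,
      ENNReal.toReal_sub_of_le prob_le_one ENNReal.one_ne_top, ENNReal.toReal_one]
  filter_upwards [limsup_birkhoff_le hT hTe hA, limsup_birkhoff_le hT hTe hA.compl]
    with x h1 h2
  set a := (μ A).toReal
  set u : ℕ → ℝ := fun n => birkhoffSum T (A.indicator (1 : α → ℝ)) n x / n with hu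
  set v : ℕ → ℝ := fun n => birkhoffSum T (Aᶜ.indicator (1 : α → ℝ)) n x / n with hv
  have hu0 : ∀ n, 0 ≤ u n := fun n => div_nonneg (hS0 A n x) n.cast_nonneg
  have hu1 : ∀ n, u n ≤ 1 := by
    intro n
    rcases Nat.eq_zero_or_pos n with rfl | hn
    · simp [hu]
    · exact div_le_one_of_le₀ (hSn A n x) n.cast_nonneg
  have hv1 : ∀ n, v n ≤ 1 := by
    intro n
    rcases Nat.eq_zero_or_pos n with rfl | hn
    · simp [hv]
    · exact div_le_one_of_le₀ (hSn Aᶜ n x) n.cast_nonneg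
  have hvbdd : IsBoundedUnder (· ≤ ·) atTop v := isBoundedUnder_of ⟨1, hv1⟩
  have hubdd : IsBoundedUnder (· ≤ ·) atTop u := isBoundedUnder_of ⟨1, hu1⟩
  have hubdd' : IsBoundedUnder (· ≥ ·) atTop u := isBoundedUnder_of ⟨0, hu0⟩
  rw [hAc] at h2
  apply tendsto_of_le_liminf_of_limsup_le ?_ h1 hubdd hubdd'
  -- a ≤ liminf u
  apply _root_.le_of_forall_pos_le_add
  intro ε hε
  have hv_lt : limsup v atTop < (1 - a) + ε := lt_of_le_of_lt h2 (by linarith)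
  have hev := eventually_lt_of_limsup_lt hv_lt hvbdd
  have hge : ∀ᶠ n in atTop, a - ε ≤ u n := by
    filter_upwards [hev, eventually_ge_atTop 1] with n hn hn1
    have hnpos : (0 : ℝ) < n := by exact_mod_cast hn1
    have hrel : v n = 1 - u n := by
      rw [hv, hu]
      simp only
      rw [hcompl n x, sub_div, div_self (ne_of_gt hnpos)]
    rw [hrel] at hn
    linarith
  have := le_liminf_of_le hubdd.isCoboundedUnder_ge hge
  linarith [this]

end Birkhoff

end AuxBirkhoff

variable {E : Type*} [NormedAddCommGroup E] [NormedSpace ℝ E]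
  {H : Type*} [TopologicalSpace H] (I : ModelWithCorners ℝ E H)
  {M : Type*} [MetricSpace M] [ChartedSpace H M]

set_option maxHeartbeats 1000000 in
/-- Let `f` be a `C¹` diffeomorphism of a compact Riemannian manifold, `μ`
ergodic, `B` measurable with `μ(B) > 0`, `ξ` a finite Borel partition of `M` refining
`{B, M∖B}` and `γ > 0`. Then for `μ`-a.e. `x ∈ B`, for all sufficiently large `n` there is an
integer `q ∈ [n, (1+γ)n]` with `f^q(x) ∈ ξ(x)`; consequently, with
`Λ₁ⁿ = {x ∈ B : f^q(x) ∈ ξ(x) for some integer q ∈ [n,(1+γ)n]}`,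
`lim_n μ(Λ₁ⁿ) = μ(B)`. -/
theorem returns_in_window_ae_and_full_measure
    [FiniteDimensional ℝ E] [I.Boundaryless] [CompactSpace M] [IsManifold I (⊤ : ℕ∞) M]
    [MeasurableSpace M] [BorelSpace M]
    (f : Equiv.Perm M) (hf : IsC1Diffeo I f)
    (μ : Measure M) [IsProbabilityMeasure μ] (hμ : Ergodic f μ)
    (B : Set M) (hBm : MeasurableSet B) (hB : 0 < μ B)
    (ξ : Finset (Set M)) (hξm : ∀ A ∈ ξ, MeasurableSet A)
    (hξcov : ⋃₀ (ξ : Set (Set M)) = Set.univ)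
    (hξdisj : (ξ : Set (Set M)).PairwiseDisjoint id)
    (hξref : ∀ A ∈ ξ, A ⊆ B ∨ A ⊆ Bᶜ)
    (γ : ℝ) (hγ : 0 < γ) :
    (∀ᵐ x ∂μ, x ∈ B →
      ∀ᶠ n : ℕ in Filter.atTop, ∃ q : ℕ, (n : ℝ) ≤ q ∧ (q : ℝ) ≤ (1 + γ) * n ∧
        ∃ A ∈ ξ, x ∈ A ∧ f^[q] x ∈ A) ∧
    Filter.Tendsto
      (fun n : ℕ => μ {x ∈ B | ∃ q : ℕ, (n : ℝ) ≤ q ∧ (q : ℝ) ≤ (1 + γ) * n ∧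
          ∃ A ∈ ξ, x ∈ A ∧ f^[q] x ∈ A})
      Filter.atTop (nhds (μ B)) := by
  classical
  have hcont : Continuous (⇑f) := hf.1.continuous
  have hcont' : Continuous (⇑f.symm) := hf.2.continuous
  let homeo : Homeomorph M M :=
    { toEquiv := f, continuous_toFun := hcont, continuous_invFun := hcont' }
  have hTe : MeasurableEmbedding (⇑f) := homeo.measurableEmbedding
  have hTm : Measurable (⇑f) := hTe.measurable
  -- Part 1
  have part1 : ∀ᵐ x ∂μ, x ∈ B →
      ∀ᶠ n : ℕ in Filter.atTop, ∃ q : ℕ, (n : ℝ) ≤ q ∧ (q : ℝ) ≤ (1 + γ) * n ∧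
        ∃ A ∈ ξ, x ∈ A ∧ f^[q] x ∈ A := by
    have hconv : ∀ᵐ x ∂μ, ∀ A ∈ (ξ : Set (Set M)),
        Tendsto (fun n => birkhoffSum (⇑f) (A.indicator (1 : M → ℝ)) n x / n) atTop
          (𝓝 ((μ A).toReal)) := by
      rw [ae_ball_iff ξ.countable_toSet]
      intro A hA
      exact birkhoff_indicator_tendsto hμ hTe (hξm A hA)
    have hnull : ∀ᵐ x ∂μ, ∀ A ∈ (ξ : Set (Set M)), μ A = 0 → x ∉ A := by
      rw [ae_ball_iff ξ.countable_toSet]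
      intro A hA
      by_cases h : μ A = 0
      · have : ∀ᵐ x ∂μ, x ∉ A := (MeasureTheory.ae_iff.2 (by simpa using h))
        filter_upwards [this] with x hx _
        exact hx
      · filter_upwards with x h0
        exact absurd h0 h
    filter_upwards [hconv, hnull] with x hx1 hx2 hxB
    obtain ⟨A, hAξ, hxA⟩ : ∃ A ∈ (ξ : Set (Set M)), x ∈ A := by
      have hx : x ∈ ⋃₀ (ξ : Set (Set M)) := hξcov.symm ▸ Set.mem_univ x
      exact hx
    have hμA : μ A ≠ 0 := fun h => hx2 A hAξ h hxA
    set c : ℝ := (μ A).toReal with hcdef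
    have hc : 0 < c := ENNReal.toReal_pos hμA (measure_ne_top μ A)
    have hc1 : c ≤ 1 := by
      rw [hcdef]
      exact ENNReal.toReal_le_of_le_ofReal zero_le_one (by simpa using prob_le_one)
    have htd := hx1 A hAξ
    set ε : ℝ := γ * c / (2 * (2 + γ)) with hεdef
    have hεpos : 0 < ε := by
      apply div_pos (mul_pos hγ hc)
      nlinarith
    have hεlt : ε < c := by
      rw [hεdef, div_lt_iff₀ (by nlinarith : (0:ℝ) < 2 * (2 + γ))]
      nlinarith
    obtain ⟨n₀, hn₀⟩ := Metric.tendsto_atTop.mp htd ε hεpos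
    rw [eventually_atTop]
    refine ⟨max n₀ (max ⌈(2:ℝ)/γ⌉₊ 1), fun n hn => ?_⟩
    have hnn₀ : n₀ ≤ n := le_trans (le_max_left _ _) hn
    have hn1 : 1 ≤ n := le_trans (le_max_of_le_right (le_max_right _ _)) hn
    have hnγ : (2:ℝ)/γ ≤ n := by
      have : ⌈(2:ℝ)/γ⌉₊ ≤ n := le_trans (le_max_of_le_right (le_max_left _ _)) hn
      exact (Nat.ceil_le.mp this)
    have hnR : (1:ℝ) ≤ n := by exact_mod_cast hn1
    have hnpos : (0:ℝ) < n := by linarith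
    set Mn : ℕ := ⌊(1 + γ) * n⌋₊ with hMdef
    have hprod_nonneg : (0:ℝ) ≤ (1 + γ) * n := by nlinarith
    have hMn_ge : n ≤ Mn := Nat.le_floor (by nlinarith)
    have hMn_le : (Mn : ℝ) ≤ (1 + γ) * n := Nat.floor_le hprod_nonneg
    have hMn_gt : (1 + γ) * n - 1 < (Mn : ℝ) := by
      have := Nat.lt_floor_add_one ((1 + γ) * n)
      linarith
    set φ : M → ℝ := A.indicator 1 with hφdef
    have hd1 := hn₀ n hnn₀
    have hd2 := hn₀ Mn (le_trans hnn₀ hMn_ge)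
    rw [Real.dist_eq, abs_lt] at hd1 hd2
    have hMpos : (0:ℝ) < Mn := by
      have : (1:ℝ) ≤ Mn := by exact_mod_cast le_trans hn1 hMn_ge
      linarith
    have hSnlt : birkhoffSum (⇑f) φ n x < (c + ε) * n := by
      have := hd1.2
      rw [div_sub' (ne_of_gt hnpos)] at this
      have := (div_lt_iff₀ hnpos).mp this
      nlinarith
    have hSMgt : (c - ε) * Mn < birkhoffSum (⇑f) φ Mn x := by
      have := hd2.1
      rw [div_sub' (ne_of_gt hMpos)] at this
      have := (lt_div_iff₀ hMpos).mp this
      nlinarith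
    have hεc : (2 + γ) * ε = γ * c / 2 := by
      rw [hεdef]
      field_simp
    have hpos : birkhoffSum (⇑f) φ n x < birkhoffSum (⇑f) φ Mn x := by
      have h1 : (c - ε) * ((1 + γ) * n - 1) ≤ (c - ε) * Mn := by
        apply mul_le_mul_of_nonneg_left hMn_gt.le (by linarith)
      have h2 : (c - ε) * ((1 + γ) * n - 1) - (c + ε) * n
          = n * (γ * c - (2 + γ) * ε) - (c - ε) := by ring
      have h3 : γ * c - (2 + γ) * ε = γ * c / 2 := by
        rw [hεc]; ring
      have h4 : n * (γ * c / 2) ≥ c := by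
        rw [ge_iff_le, ← div_le_iff₀ (by nlinarith : (0:ℝ) < γ * c / 2)]
        calc c / (γ * c / 2) = 2 / γ := by
              field_simp
          _ ≤ n := hnγ
      nlinarith
    have hdiff : birkhoffSum (⇑f) φ Mn x - birkhoffSum (⇑f) φ n x
        = ∑ k ∈ Finset.Ico n Mn, φ (f^[k] x) := by
      have := Finset.sum_Ico_consecutive (fun k => φ (f^[k] x))
        (Nat.zero_le n) hMn_ge
      unfold birkhoffSum
      rw [Finset.range_eq_Ico, Finset.range_eq_Ico]
      linarith
    have hex : ∃ k ∈ Finset.Ico n Mn, f^[k] x ∈ A := by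
      by_contra hno
      push_neg at hno
      have : ∑ k ∈ Finset.Ico n Mn, φ (f^[k] x) = 0 := by
        apply Finset.sum_eq_zero
        intro k hk
        exact Set.indicator_of_notMem (hno k hk) 1
      rw [this] at hdiff
      linarith
    obtain ⟨k, hk, hkA⟩ := hex
    rw [Finset.mem_Ico] at hk
    refine ⟨k, by exact_mod_cast hk.1, ?_, A, hAξ, hxA, hkA⟩
    have : (k : ℝ) < Mn := by exact_mod_cast hk.2
    linarith
  constructor
  · exact part1
  -- Part 2
  set Λ : ℕ → Set M := fun n => {x ∈ B | ∃ q : ℕ, (n : ℝ) ≤ q ∧ (q : ℝ) ≤ (1 + γ) * n ∧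
      ∃ A ∈ ξ, x ∈ A ∧ f^[q] x ∈ A} with hΛdef
  have hΛB : ∀ n, Λ n ⊆ B := fun n x hx => hx.1
  set C : ℕ → Set M := fun n => ⋂ m, Λ (n + m) with hCdef
  have hCm : Monotone C := by
    intro a b hab x hx
    refine Set.mem_iInter.2 fun m => ?_
    have h2 := Set.mem_iInter.1 hx (b - a + m)
    rwa [show a + (b - a + m) = b + m from by omega] at h2
  have hCsubΛ : ∀ n, C n ⊆ Λ n := by
    intro n x hx
    have := Set.mem_iInter.1 hx 0
    simpa using this
  have htendC : Tendsto (fun n => μ (C n)) atTop (𝓝 (μ (⋃ n, C n))) :=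
    tendsto_measure_iUnion_atTop hCm
  have hU : μ (⋃ n, C n) = μ B := by
    apply le_antisymm
    · exact measure_mono (Set.iUnion_subset fun n => (hCsubΛ n).trans (hΛB n))
    · apply measure_mono_ae
      filter_upwards [part1] with x hx hxB
      obtain ⟨n₀, hn₀⟩ := eventually_atTop.mp (hx hxB)
      exact Set.mem_iUnion.2 ⟨n₀, Set.mem_iInter.2 fun m => ⟨hxB, hn₀ (n₀ + m) (by omega)⟩⟩
  have htendC' : Tendsto (fun n => μ (C n)) atTop (𝓝 (μ B)) := hU ▸ htendC
  exact tendsto_of_tendsto_of_tendsto_of_le_of_le htendC' tendsto_const_nhds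
    (fun n => measure_mono (hCsubΛ n)) (fun n => measure_mono (hΛB n))


end
end
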